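/- arXiv:2201.00198 — 4 statements merged into one kernel-verified Lean document; each statement's English description precedes it below -/
import Mathlib

section
/- For any n×n real symmetric matrix M, there exists a basis of ℝ^n consisting of eigenvectors of M each having minimal support; that is, each basis vector f is an eigenvector of M such that every eigenvector g of M for the same eigenvalue with supp(g) ⊆ supp(f) satisfies supp(g) = supp(f). -/
open Matrix Polynomial

section NodalDefs

variable {V : Type*}

/-- The product of the signature over consecutive pairs of a list of vertices. -/
noncomputable def chainSign (σ : V → V → ℝ) (l : List V) : ℝ :=
  ((l.zip l.tail).map fun p => σ p.1 p.2).prod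

/-- One step of a strong nodal domain walk. -/
def SWalkStep (G : SimpleGraph V) (σ : V → V → ℝ) (f : V → ℝ) (u v : V) : Prop :=
  G.Adj u v ∧ 0 < f u * σ u v * f v

/-- `x` and `y` are connected by a strong nodal domain walk (S-walk). -/
def SConn (G : SimpleGraph V) (σ : V → V → ℝ) (f : V → ℝ) (x y : V) : Prop :=
  ∃ l : List V, 2 ≤ l.length ∧ l.Chain' (SWalkStep G σ f) ∧
    l.head? = some x ∧ l.getLast? = some y

/-- The strong nodal domain (as a vertex set) containing the non-zero `w`. -/
def strongClass (G : SimpleGraph V) (σ : V → V → ℝ) (f : V → ℝ) (w : V) : Set V :=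
  {x | f x ≠ 0 ∧ (x = w ∨ SConn G σ f x w)}

/-- The set of strong nodal domains (as vertex sets) of `f`. -/
def strongDomains (G : SimpleGraph V) (σ : V → V → ℝ) (f : V → ℝ) : Set (Set V) :=
  {D | ∃ w, f w ≠ 0 ∧ D = strongClass G σ f w}

/-- 𝔖(f): the number of strong nodal domains of `f`. -/
noncomputable def numStrong (G : SimpleGraph V) (σ : V → V → ℝ) (f : V → ℝ) : ℕ :=
  Nat.card (strongDomains G σ f)

/-- A list of vertices is a weak nodal domain walk (W-walk). -/
def IsWWalk (G : SimpleGraph V) (σ : V → V → ℝ) (f : V → ℝ) (l : List V) : Prop :=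
  2 ≤ l.length ∧ l.Chain' G.Adj ∧
    ∀ i j : Fin l.length, i < j → f (l.get i) ≠ 0 → f (l.get j) ≠ 0 →
      (∀ k : Fin l.length, i < k → k < j → f (l.get k) = 0) →
      0 < f (l.get i) * chainSign σ ((l.drop i.val).take (j.val - i.val + 1)) * f (l.get j)

/-- `x` and `y` are connected by a weak nodal domain walk (W-walk). -/
def WConn (G : SimpleGraph V) (σ : V → V → ℝ) (f : V → ℝ) (x y : V) : Prop :=
  ∃ l : List V, IsWWalk G σ f l ∧ l.head? = some x ∧ l.getLast? = some y

/-- The weak nodal domain (as a vertex set) associated with the class of the non-zero `w`: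
the class `W` of `w` together with all vertices having a W-walk to some vertex of `W`. -/
def weakClass (G : SimpleGraph V) (σ : V → V → ℝ) (f : V → ℝ) (w : V) : Set V :=
  {x | (f x ≠ 0 ∧ (x = w ∨ WConn G σ f x w)) ∨
       ∃ u, f u ≠ 0 ∧ (u = w ∨ WConn G σ f u w) ∧ WConn G σ f x u}

/-- The set of weak nodal domains (as vertex sets) of `f`. -/
def weakDomains (G : SimpleGraph V) (σ : V → V → ℝ) (f : V → ℝ) : Set (Set V) :=
  {D | ∃ w, f w ≠ 0 ∧ D = weakClass G σ f w}

/-- 𝔚(f): the number of weak nodal domains of `f`. -/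
noncomputable def numWeak (G : SimpleGraph V) (σ : V → V → ℝ) (f : V → ℝ) : ℕ :=
  Nat.card (weakDomains G σ f)

/-- `σ` is a valid signature on `G`: symmetric and ±1-valued on edges. -/
def IsSignature (G : SimpleGraph V) (σ : V → V → ℝ) : Prop :=
  (∀ x y, σ x y = σ y x) ∧ ∀ x y, G.Adj x y → σ x y = 1 ∨ σ x y = -1

/-- `M` is compatible with the signed graph `(G, σ)`: `(G, σ)` is the induced
signed graph of `M`. -/
def Compatible (M : Matrix V V ℝ) (G : SimpleGraph V) (σ : V → V → ℝ) : Prop :=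
  (∀ x y, G.Adj x y ↔ x ≠ y ∧ M x y ≠ 0) ∧
  (∀ x y, G.Adj x y → σ x y = -(M x y / |M x y|))

/-- A signed graph is balanced if every cycle has positive sign. -/
def IsBalanced (G : SimpleGraph V) (σ : V → V → ℝ) : Prop :=
  ∀ (x : V) (p : G.Walk x x), p.IsCycle → chainSign σ p.support = 1

/-- A signed graph is antibalanced if its negation is balanced. -/
def IsAntibalanced (G : SimpleGraph V) (σ : V → V → ℝ) : Prop :=
  IsBalanced G (fun x y => -(σ x y))

/-- ℓ(G) = |E| - |V| + c(G), the cyclomatic number of `G`. -/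
noncomputable def cyclomatic (G : SimpleGraph V) : ℕ :=
  Nat.card G.edgeSet + Nat.card G.ConnectedComponent - Nat.card V

/-- The subgraph of `G` on the edges `{x,y}` with `f x * σ x y * f y > 0`. -/
def posSubgraph (G : SimpleGraph V) (σ : V → V → ℝ) (f : V → ℝ) : SimpleGraph V where
  Adj x y := G.Adj x y ∧ 0 < f x * σ x y * f y ∧ 0 < f y * σ y x * f x
  symm := ⟨fun _ _ h => ⟨h.1.symm, h.2.2, h.2.1⟩⟩
  loopless := ⟨fun x h => G.loopless.irrefl x h.1⟩

/-- `x` is tree-like: removing `x` and its incident edges increases the number of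
connected components by `d_x - 1`. -/
def IsTreeLike (G : SimpleGraph V) (x : V) : Prop :=
  Nat.card (SimpleGraph.induce {y | y ≠ x} G).ConnectedComponent + 1
    = Nat.card G.ConnectedComponent + Nat.card (G.neighborSet x)

/-- The Fiedler zero set of `f` on `G`. -/
def fiedlerZeroSet (G : SimpleGraph V) (f : V → ℝ) : Set V :=
  {x | f x = 0 ∧ ((∀ y, G.Adj x y → f y = 0) ∨ ¬ IsTreeLike G x)}

end NodalDefs

private lemma key_induct (n : ℕ) (M : Matrix (Fin n) (Fin n) ℝ) (μ : ℝ) :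
    ∀ (k : ℕ) (f : Fin n → ℝ), (Finset.univ.filter fun j => f j ≠ 0).card ≤ k →
      M.mulVec f = μ • f →
      f ∈ Submodule.span ℝ {f : Fin n → ℝ | f ≠ 0 ∧ ∃ ν : ℝ, M.mulVec f = ν • f ∧
        ∀ g : Fin n → ℝ, g ≠ 0 → M.mulVec g = ν • g →
          {j | g j ≠ 0} ⊆ {j | f j ≠ 0} → {j | g j ≠ 0} = {j | f j ≠ 0}} := by
  intro k
  induction k with
  | zero =>
    intro f hcard _
    have : f = 0 := by
      funext j
      show f j = 0
      by_contra hj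
      have : j ∈ Finset.univ.filter fun j => f j ≠ 0 := by simp [hj]
      have := Finset.card_pos.mpr ⟨j, this⟩
      omega
    simp [this]
  | succ k ih =>
    intro f hcard heig
    by_cases hf0 : f = 0
    · simp [hf0]
    by_cases hmin : ∀ g : Fin n → ℝ, g ≠ 0 → M.mulVec g = μ • g →
        {j | g j ≠ 0} ⊆ {j | f j ≠ 0} → {j | g j ≠ 0} = {j | f j ≠ 0}
    · exact Submodule.subset_span ⟨hf0, μ, heig, hmin⟩
    push_neg at hmin
    obtain ⟨g, hg0, hgeig, hgsub, hgne⟩ := hmin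
    -- pick j with g j ≠ 0 (hence f j ≠ 0)
    obtain ⟨j, hgj⟩ : ∃ j, g j ≠ 0 := by
      by_contra h; push_neg at h; exact hg0 (funext fun j => h j)
    have hfj : f j ≠ 0 := hgsub hgj
    -- pick j0 with f j0 ≠ 0, g j0 = 0
    obtain ⟨j0, hfj0, hgj0x⟩ := Set.exists_of_ssubset (hgsub.ssubset_of_ne hgne)
    have hgj0 : g j0 = 0 := not_not.mp hgj0x
    set c : ℝ := f j / g j with hc
    set h : Fin n → ℝ := f - c • g with hh
    have hheig : M.mulVec h = μ • h := by
      rw [hh, Matrix.mulVec_sub, heig, Matrix.mulVec_smul, hgeig, smul_sub, smul_comm]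
    have hhj : h j = 0 := by
      simp only [hh, Pi.sub_apply, Pi.smul_apply, smul_eq_mul, hc]
      field_simp
      ring
    -- support of h ⊆ support f minus j
    have hhsub : (Finset.univ.filter fun i => h i ≠ 0) ⊂ Finset.univ.filter fun i => f i ≠ 0 := by
      constructor
      · intro i hi
        simp only [Finset.mem_filter, Finset.mem_univ, true_and] at hi ⊢
        intro hfi
        apply hi
        have hgi : g i = 0 := by
          by_contra hgi
          exact (hgsub hgi : f i ≠ 0) hfi
        simp [hh, hfi, hgi]
      · intro hsub
        have := hsub (by simp [hfj] : j ∈ Finset.univ.filter fun i => f i ≠ 0)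
        simp [hhj] at this
    have hgsubF : (Finset.univ.filter fun i => g i ≠ 0) ⊂ Finset.univ.filter fun i => f i ≠ 0 := by
      constructor
      · intro i hi
        simp only [Finset.mem_filter, Finset.mem_univ, true_and] at hi ⊢
        exact hgsub hi
      · intro hsub
        have := hsub (Finset.mem_filter.mpr ⟨Finset.mem_univ _, hfj0⟩)
        simp [hgj0] at this
    have hhcard : (Finset.univ.filter fun i => h i ≠ 0).card ≤ k := by
      have := Finset.card_lt_card hhsub; omega
    have hgcard : (Finset.univ.filter fun i => g i ≠ 0).card ≤ k := by
      have := Finset.card_lt_card hgsubF; omega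
    have hmemh := ih h hhcard hheig
    have hmemg := ih g hgcard hgeig
    have : f = h + c • g := by rw [hh]; abel
    rw [this]
    exact Submodule.add_mem _ hmemh (Submodule.smul_mem _ _ hmemg)


/-- every real symmetric matrix has a basis of eigenvectors with
minimal support. -/
theorem stmt_0 (n : ℕ) (M : Matrix (Fin n) (Fin n) ℝ) (hM : M.IsSymm) :
    ∃ b : Module.Basis (Fin n) ℝ (Fin n → ℝ),
      ∀ i : Fin n, ∃ μ : ℝ, M.mulVec (b i) = μ • (b i) ∧
        ∀ g : Fin n → ℝ, g ≠ 0 → M.mulVec g = μ • g →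
          {j | g j ≠ 0} ⊆ {j | b i j ≠ 0} → {j | g j ≠ 0} = {j | b i j ≠ 0} := by
  classical
  set S : Set (Fin n → ℝ) := {f : Fin n → ℝ | f ≠ 0 ∧ ∃ ν : ℝ, M.mulVec f = ν • f ∧
        ∀ g : Fin n → ℝ, g ≠ 0 → M.mulVec g = ν • g →
          {j | g j ≠ 0} ⊆ {j | f j ≠ 0} → {j | g j ≠ 0} = {j | f j ≠ 0}} with hS
  have hspan : ∀ (f : Fin n → ℝ) (μ : ℝ), M.mulVec f = μ • f → f ∈ Submodule.span ℝ S :=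
    fun f μ hf => key_induct n M μ _ f le_rfl hf
  -- span S = ⊤ via spectral theorem
  have hH : M.IsHermitian := by
    rw [Matrix.IsHermitian, Matrix.conjTranspose_eq_transpose_of_trivial]; exact hM
  set eb := hH.eigenvectorBasis with heb
  let e : EuclideanSpace ℝ (Fin n) ≃ₗ[ℝ] (Fin n → ℝ) := WithLp.linearEquiv 2 ℝ (Fin n → ℝ)
  let B : Module.Basis (Fin n) ℝ (Fin n → ℝ) := eb.toBasis.map e
  have hBeb : ∀ i, B i = ⇑(eb i) := fun i => rfl
  have htop : Submodule.span ℝ S = ⊤ := by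
    rw [eq_top_iff]
    intro x _
    have hx : x ∈ Submodule.span ℝ (Set.range fun i => B i) := Module.Basis.mem_span B x
    refine Submodule.span_le.mpr ?_ hx
    rintro _ ⟨i, rfl⟩
    exact hspan (B i) (hH.eigenvalues i) (by rw [hBeb]; exact hH.mulVec_eigenvectorBasis i)
  -- extract a basis from the spanning set S
  obtain ⟨s, hsS, hspans, hli⟩ := exists_linearIndependent ℝ S
  rw [htop] at hspans
  haveI : Fintype s := (hli.setFinite).fintype
  let bs : Module.Basis s ℝ (Fin n → ℝ) := Module.Basis.mk hli (by rw [Subtype.range_val, hspans])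
  have hcard : Fintype.card s = n := by
    have := Module.finrank_eq_card_basis bs
    simpa [Module.finrank_pi] using this.symm
  let eq : Fin n ≃ s := (Fintype.equivFinOfCardEq hcard).symm
  refine ⟨bs.reindex eq.symm, fun i => ?_⟩
  have hbi : (bs.reindex eq.symm) i = (eq i : Fin n → ℝ) := by
    rw [Module.Basis.reindex_apply, Equiv.symm_symm, Module.Basis.mk_apply]
  obtain ⟨hne, μ, heig, hmin⟩ := hsS (eq i).2
  exact ⟨μ, by rw [hbi]; exact heig, by rw [hbi]; exact hmin⟩
end

section
/- Let Γ = (G,σ) be a connected signed graph on n vertices, let M be any n×n real symmetric matrix compatible with Γ, let λ_n be the largest eigenvalue of M, and let f_n be an eigenvector of M corresponding to λ_n. Then Γ is antibalanced if and only if 𝔚(f_n) = 𝔖(f_n) = n. Moreover, when Γ is antibalanced, λ_n is a simple eigenvalue of M. -/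
open Matrix Polynomial
open RealInnerProductSpace

section Aux
variable {V : Type*} {G : SimpleGraph V} {τ σ : V → V → ℝ}

lemma chainSign_cons_cons (a b : V) (t : List V) :
    chainSign σ (a :: b :: t) = σ a b * chainSign σ (b :: t) := by
  simp [chainSign]

@[simp] lemma chainSign_nil : chainSign σ ([] : List V) = 1 := by simp [chainSign]

@[simp] lemma chainSign_singleton (a : V) : chainSign σ [a] = 1 := by simp [chainSign]

lemma chainSign_pair (a b : V) : chainSign σ [a, b] = σ a b := by
  simp [chainSign]

lemma chainSign_mul_self (g : V → ℝ) (hg : ∀ v, g v * g v = 1) :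
    ∀ (l : List V) (a b : V), l.head? = some a → l.getLast? = some b →
      chainSign (fun x y => g x * g y) l = g a * g b
  | [], a, b => by simp
  | [x], a, b => by
      intro ha hb
      have hxa : x = a := by simpa using ha
      have hxb : x = b := by simpa using hb
      rw [chainSign_singleton, ← hxa, ← hxb]
      exact (hg x).symm
  | x :: y :: t, a, b => by
      intro ha hb
      simp at ha; subst ha
      rw [List.getLast?_cons_cons] at hb
      rw [chainSign_cons_cons, chainSign_mul_self g hg (y :: t) y b rfl hb]
      linear_combination (g x * g b) * hg y

lemma chainSign_congr {G : SimpleGraph V} (h : ∀ x y, G.Adj x y → σ x y = τ x y) :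
    ∀ (l : List V), l.Chain' G.Adj → chainSign σ l = chainSign τ l
  | [] , _ => by simp
  | [x], _ => by simp
  | x :: y :: t, hc => by
      obtain ⟨hxy, hc'⟩ := List.isChain_cons_cons.mp hc
      rw [chainSign_cons_cons, chainSign_cons_cons, h x y hxy,
        chainSign_congr h (y :: t) hc']

namespace SimpleGraph.Walk

noncomputable def wSign (τ : V → V → ℝ) {x y : V} (p : G.Walk x y) : ℝ :=
  chainSign τ p.support

@[simp] lemma wSign_nil {x : V} : (Walk.nil : G.Walk x x).wSign τ = 1 := by
  simp [wSign, chainSign]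

@[simp] lemma wSign_cons {x y z : V} (h : G.Adj x y) (p : G.Walk y z) :
    (Walk.cons h p).wSign τ = τ x y * p.wSign τ := by
  rw [wSign, wSign, support_cons, support_eq_cons p, chainSign_cons_cons]

lemma wSign_append {x y z : V} (p : G.Walk x y) (q : G.Walk y z) :
    (p.append q).wSign τ = p.wSign τ * q.wSign τ := by
  induction p with
  | nil => simp
  | cons h p ih => rw [cons_append, wSign_cons, wSign_cons, ih]; ring

lemma wSign_reverse (hsym : ∀ a b, τ a b = τ b a) {x y : V} (p : G.Walk x y) :
    p.reverse.wSign τ = p.wSign τ := by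
  induction p with
  | nil => simp
  | cons h p ih =>
      rw [reverse_cons, wSign_append, ih, wSign_cons, wSign_cons, wSign_nil, hsym]
      ring

lemma wSign_pm (hτ : ∀ a b, G.Adj a b → τ a b = 1 ∨ τ a b = -1) {x y : V} (p : G.Walk x y) :
    p.wSign τ = 1 ∨ p.wSign τ = -1 := by
  induction p with
  | nil => left; simp
  | cons h p ih =>
      rw [wSign_cons]
      rcases hτ _ _ h with h1 | h1 <;> rcases ih with h2 | h2 <;> simp [h1, h2]

lemma wSign_closed [DecidableEq V]
    (hpm : ∀ a b, G.Adj a b → τ a b = 1 ∨ τ a b = -1)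
    (hsym : ∀ a b, τ a b = τ b a)
    (hbal : ∀ (x : V) (p : G.Walk x x), p.IsCycle → chainSign τ p.support = 1) :
    ∀ (m : ℕ) {x : V} (c : G.Walk x x), c.length ≤ m → c.wSign τ = 1 := by
  intro m
  induction m with
  | zero =>
      intro x c hc
      cases c with
      | nil => simp
      | cons h p => simp [Walk.length_cons] at hc
  | succ m ih =>
      intro x c hc
      cases c with
      | nil => simp
      | cons h p =>
        rename_i y
        by_cases hd : (Walk.cons h p).support.tail.Nodup
        · by_cases hp1 : p.length = 1
          · cases p with
            | nil => simp at hp1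
            | cons h2 q =>
              rename_i z
              cases q with
              | nil =>
                  rw [wSign_cons, wSign_cons, wSign_nil, hsym y x]
                  rcases hpm x y h with h1 | h1 <;> rw [h1] <;> norm_num
              | cons h3 q' => simp [Walk.length_cons] at hp1
          · have hcyc : (Walk.cons h p).IsCycle := by
              rw [Walk.cons_isCycle_iff]
              constructor
              · rw [Walk.isPath_def]
                simpa using hd
              · intro he
                cases p with
                | nil => simp at he
                | cons h2 q =>
                  rename_i z
                  rw [Walk.edges_cons, List.mem_cons] at he
                  have hpath : (Walk.cons h2 q).IsPath := by
                    rw [Walk.isPath_def]; simpa using hd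
                  rcases he with he | he
                  · rw [Sym2.eq_iff] at he
                    rcases he with ⟨hxy, -⟩ | ⟨hxz, -⟩
                    · exact G.loopless.irrefl y (hxy ▸ h)
                    · subst hxz
                      have hq : q.IsPath := hpath.of_cons
                      have : q = Walk.nil := (Walk.isPath_iff_eq_nil (p := q)).mp hq
                      subst this
                      simp at hp1
                  · have hy : y ∈ q.support := q.snd_mem_support_of_mem_edges he
                    have hnd := hpath.support_nodup
                    rw [Walk.support_cons, List.nodup_cons] at hnd
                    exact hnd.1 hy
            exact hbal x _ hcyc
        · obtain ⟨v, hv⟩ := List.exists_duplicate_iff_not_nodup.mpr hd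
          have hv2 : 2 ≤ (Walk.cons h p).support.tail.count v :=
            List.duplicate_iff_two_le_count.mp hv
          have hvmem : v ∈ (Walk.cons h p).support := List.mem_of_mem_tail hv.mem
          have key : ∀ (c' : G.Walk v v), c'.length ≤ m + 1 →
              2 ≤ c'.support.tail.count v → c'.wSign τ = 1 := by
            intro c' hlen hcount
            cases c' with
            | nil => simp at hcount
            | cons h' p' =>
              rename_i w
              rw [Walk.support_cons, List.tail_cons] at hcount
              have hvp : v ∈ p'.support := by
                have : 0 < p'.support.count v := by omega
                exact List.count_pos_iff.mp this
              have hsplit := Walk.take_spec p' hvp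
              have hc1 : ((p'.takeUntil v hvp).support.count v) = 1 :=
                Walk.count_support_takeUntil_eq_one p' hvp
              have hs : p'.support =
                  (p'.takeUntil v hvp).support ++ (p'.dropUntil v hvp).support.tail := by
                conv_lhs => rw [← hsplit]
                rw [Walk.support_append]
              have hlen2 : (p'.takeUntil v hvp).length + (p'.dropUntil v hvp).length
                  = p'.length := by
                conv_rhs => rw [← hsplit]
                rw [Walk.length_append]
              have hq2len : 1 ≤ (p'.dropUntil v hvp).length := by
                rw [hs, List.count_append, hc1] at hcount
                have h1 : 1 ≤ (p'.dropUntil v hvp).support.tail.count v := by omega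
                have hne : (p'.dropUntil v hvp).support.tail ≠ [] := by
                  intro h0; rw [h0] at h1; simp at h1
                have h3 := Walk.length_support (p'.dropUntil v hvp)
                have h4 : 0 < (p'.dropUntil v hvp).support.tail.length :=
                  List.length_pos_iff.mpr hne
                rw [List.length_tail, h3] at h4
                omega
              have hlc : p'.length + 1 ≤ m + 1 := by
                simpa [Walk.length_cons] using hlen
              have e1 : (Walk.cons h' (p'.takeUntil v hvp)).wSign τ = 1 := by
                apply ih
                rw [Walk.length_cons]; omega
              have e2 : (p'.dropUntil v hvp).wSign τ = 1 := by
                apply ih; omega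
              rw [wSign_cons] at e1 ⊢
              calc τ v w * p'.wSign τ
                  = τ v w * ((p'.takeUntil v hvp).wSign τ * (p'.dropUntil v hvp).wSign τ) := by
                    conv_lhs => rw [← hsplit]
                    rw [wSign_append]
                _ = (τ v w * (p'.takeUntil v hvp).wSign τ) * (p'.dropUntil v hvp).wSign τ := by
                    ring
                _ = 1 := by rw [e1, e2, one_mul]
          have hsign : ((Walk.cons h p).rotate v hvmem).wSign τ = (Walk.cons h p).wSign τ := by
            have hrot : (Walk.cons h p).rotate v hvmem
                = (((Walk.cons h p).dropUntil v hvmem).append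
                    ((Walk.cons h p).takeUntil v hvmem)) := rfl
            rw [hrot, wSign_append]
            conv_rhs => rw [← Walk.take_spec (Walk.cons h p) hvmem, wSign_append]
            ring
          have hrotlen : ((Walk.cons h p).rotate v hvmem).length = (Walk.cons h p).length := by
            have hperm := (Walk.support_rotate (Walk.cons h p) v hvmem).perm.length_eq
            have l1 := Walk.length_support ((Walk.cons h p).rotate v hvmem)
            have l2 := Walk.length_support (Walk.cons h p)
            rw [List.length_tail, List.length_tail, l1, l2] at hperm
            omega
          have hrotcount : 2 ≤ ((Walk.cons h p).rotate v hvmem).support.tail.count v := by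
            rw [(Walk.support_rotate (Walk.cons h p) v hvmem).perm.count_eq]
            exact hv2
          rw [← hsign]
          exact key _ (by omega) hrotcount

end SimpleGraph.Walk

lemma support_getLast? {x y : V} {G : SimpleGraph V} (p : G.Walk x y) :
    p.support.getLast? = some y := by
  induction p with
  | nil => simp
  | cons h p ih =>
      rw [SimpleGraph.Walk.support_cons, SimpleGraph.Walk.support_eq_cons p,
        List.getLast?_cons_cons, ← SimpleGraph.Walk.support_eq_cons p, ih]

lemma exists_switching [DecidableEq V] {G : SimpleGraph V} {τ : V → V → ℝ} (hconn : G.Connected)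
    (hpm : ∀ a b, G.Adj a b → τ a b = 1 ∨ τ a b = -1)
    (hsym : ∀ a b, τ a b = τ b a)
    (hbal : ∀ (x : V) (p : G.Walk x x), p.IsCycle → chainSign τ p.support = 1) :
    ∃ s : V → ℝ, (∀ x, s x = 1 ∨ s x = -1) ∧ ∀ x y, G.Adj x y → τ x y = s x * s y := by
  obtain ⟨r⟩ := hconn.nonempty
  have hw : ∀ x : V, Nonempty (G.Walk r x) := fun x => hconn.preconnected r x
  refine ⟨fun x => ((hw x).some).wSign τ, fun x => SimpleGraph.Walk.wSign_pm hpm _, ?_⟩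
  intro x y hxy
  show τ x y = ((hw x).some).wSign τ * ((hw y).some).wSign τ
  have hclosed := SimpleGraph.Walk.wSign_closed hpm hsym hbal
      (((hw x).some.append (SimpleGraph.Walk.cons hxy ((hw y).some.reverse))).length)
      ((hw x).some.append (SimpleGraph.Walk.cons hxy ((hw y).some.reverse))) le_rfl
  rw [SimpleGraph.Walk.wSign_append, SimpleGraph.Walk.wSign_cons,
    SimpleGraph.Walk.wSign_reverse hsym] at hclosed
  rcases SimpleGraph.Walk.wSign_pm hpm (hw x).some with h1 | h1 <;>
    rcases SimpleGraph.Walk.wSign_pm hpm (hw y).some with h2 | h2 <;>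
      rw [h1, h2] at hclosed ⊢ <;> linarith


end Aux


section LinAlg
variable {n : ℕ}

lemma charpoly_eval_eq (A : Matrix (Fin n) (Fin n) ℝ) (t : ℝ) :
    A.charpoly.eval t = (Matrix.diagonal (fun _ => t) - A).det := by
  rw [Matrix.charpoly, eval_det, Matrix.matPolyEquiv_charmatrix,
    Polynomial.eval_sub, Polynomial.eval_X, Polynomial.eval_C, Matrix.scalar_apply]

lemma eig_le_sup (hn : 0 < n) (M : Matrix (Fin n) (Fin n) ℝ) (μ : Fin n → ℝ)
    (hmono : Monotone μ) (hchar : M.charpoly = ∏ i, (Polynomial.X - Polynomial.C (μ i)))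
    (t : ℝ) (v : Fin n → ℝ) (hv : v ≠ 0) (heq : M.mulVec v = t • v) :
    t ≤ μ ⟨n - 1, Nat.sub_lt hn one_pos⟩ := by
  have hdet : (Matrix.diagonal (fun _ => t) - M).det = 0 := by
    rw [← Matrix.exists_mulVec_eq_zero_iff]
    refine ⟨v, hv, ?_⟩
    funext x
    have := congrFun heq x
    simp only [Matrix.sub_mulVec, Pi.sub_apply, Matrix.mulVec_diagonal, Pi.zero_apply]
    rw [this]
    simp
  have h0 : M.charpoly.eval t = 0 := by rw [charpoly_eval_eq]; exact hdet
  rw [hchar, Polynomial.eval_prod] at h0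
  obtain ⟨i, -, hi⟩ := Finset.prod_eq_zero_iff.mp h0
  simp only [Polynomial.eval_sub, Polynomial.eval_X, Polynomial.eval_C, sub_eq_zero] at hi
  have hle : i ≤ (⟨n - 1, Nat.sub_lt hn one_pos⟩ : Fin n) := by
    rw [Fin.le_def]
    have := i.isLt
    simp
    omega
  have := hmono hle
  linarith [hi ▸ this]

lemma isHermitian_of_isSymm (M : Matrix (Fin n) (Fin n) ℝ) (hM : M.IsSymm) :
    M.IsHermitian := by
  ext i j
  simp only [Matrix.conjTranspose_apply, star_trivial]
  exact hM.apply i j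

lemma posSemidef_shift (hn : 0 < n) (M : Matrix (Fin n) (Fin n) ℝ) (hM : M.IsSymm)
    (μ : Fin n → ℝ) (hmono : Monotone μ)
    (hchar : M.charpoly = ∏ i, (Polynomial.X - Polynomial.C (μ i))) :
    (Matrix.diagonal (fun _ : Fin n => μ ⟨n - 1, Nat.sub_lt hn one_pos⟩) - M).PosSemidef := by
  set lam := μ ⟨n - 1, Nat.sub_lt hn one_pos⟩ with hlam
  have hMh := isHermitian_of_isSymm M hM
  have hB : (Matrix.diagonal (fun _ : Fin n => lam) - M).IsHermitian :=
    (Matrix.isHermitian_diagonal _).sub hMh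
  refine hB.posSemidef_iff_eigenvalues_nonneg.mpr fun i => ?_
  have hvec := hB.mulVec_eigenvectorBasis i
  set e := hB.eigenvalues i with he
  set v : Fin n → ℝ := ⇑(hB.eigenvectorBasis i) with hv
  have hvne : v ≠ 0 := by
    intro h0
    have hnorm := hB.eigenvectorBasis.orthonormal.1 i
    have : hB.eigenvectorBasis i = 0 := by
      apply PiLp.ext
      intro x
      exact congrFun h0 x
    rw [this] at hnorm
    simp at hnorm
  have hMv : M.mulVec v = (lam - e) • v := by
    funext x
    have := congrFun hvec x
    simp only [Matrix.sub_mulVec, Pi.sub_apply, Matrix.mulVec_diagonal, Pi.smul_apply,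
      smul_eq_mul] at this ⊢
    linarith [this]
  have := eig_le_sup hn M μ hmono hchar (lam - e) v hvne hMv
  rw [← hlam] at this
  linarith [show (0 : Fin n → ℝ) i = 0 from rfl]

lemma rayleigh_le {lam : ℝ} (M : Matrix (Fin n) (Fin n) ℝ)
    (hPSD : (Matrix.diagonal (fun _ : Fin n => lam) - M).PosSemidef) (v : Fin n → ℝ) :
    v ⬝ᵥ (M *ᵥ v) ≤ lam * (v ⬝ᵥ v) := by
  have h2 := hPSD.dotProduct_mulVec_nonneg v
  have h1 : star v ⬝ᵥ ((Matrix.diagonal (fun _ : Fin n => lam) - M) *ᵥ v)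
      = lam * (v ⬝ᵥ v) - v ⬝ᵥ (M *ᵥ v) := by
    rw [star_trivial, Matrix.sub_mulVec, dotProduct_sub]
    congr 1
    simp only [dotProduct, Matrix.mulVec_diagonal, Finset.mul_sum]
    exact Finset.sum_congr rfl fun x _ => by ring
  rw [h1] at h2
  linarith

lemma rayleigh_eq_eigen {lam : ℝ} (M : Matrix (Fin n) (Fin n) ℝ)
    (hPSD : (Matrix.diagonal (fun _ : Fin n => lam) - M).PosSemidef) (v : Fin n → ℝ)
    (heq : v ⬝ᵥ (M *ᵥ v) = lam * (v ⬝ᵥ v)) : M *ᵥ v = lam • v := by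
  have h1 : star v ⬝ᵥ ((Matrix.diagonal (fun _ : Fin n => lam) - M) *ᵥ v) = 0 := by
    rw [star_trivial, Matrix.sub_mulVec, dotProduct_sub]
    have : v ⬝ᵥ ((Matrix.diagonal (fun _ : Fin n => lam)) *ᵥ v) = lam * (v ⬝ᵥ v) := by
      simp only [dotProduct, Matrix.mulVec_diagonal, Finset.mul_sum]
      exact Finset.sum_congr rfl fun x _ => by ring
    rw [this, heq]
    ring
  have h0 := (hPSD.dotProduct_mulVec_zero_iff v).mp h1
  funext x
  have := congrFun h0 x
  simp only [Matrix.sub_mulVec, Pi.sub_apply, Matrix.mulVec_diagonal, Pi.zero_apply] at this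
  simp only [Pi.smul_apply, smul_eq_mul]
  linarith

end LinAlg


lemma pf_structure {n : ℕ} (hn : 0 < n) (G : SimpleGraph (Fin n)) (σ : Fin n → Fin n → ℝ)
    (hconn : G.Connected)
    (M : Matrix (Fin n) (Fin n) ℝ) (hM : M.IsSymm) (hcompat : Compatible M G σ)
    (μ : Fin n → ℝ) (hmono : Monotone μ)
    (hchar : M.charpoly = ∏ i, (Polynomial.X - Polynomial.C (μ i)))
    (s : Fin n → ℝ) (hspm : ∀ x, s x = 1 ∨ s x = -1)
    (hsw : ∀ x y, G.Adj x y → -(σ x y) = s x * s y)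
    (g : Fin n → ℝ) (hg : g ≠ 0)
    (heig : M.mulVec g = μ ⟨n - 1, Nat.sub_lt hn one_pos⟩ • g) :
    (∀ x, g x ≠ 0) ∧ (∀ x y, G.Adj x y → g x * σ x y * g y < 0) := by
  classical
  set lam := μ ⟨n - 1, Nat.sub_lt hn one_pos⟩ with hlam
  have hPSD := posSemidef_shift hn M hM μ hmono hchar
  have hs2 : ∀ x, s x * s x = 1 := fun x => by rcases hspm x with h | h <;> rw [h] <;> norm_num
  have hsne : ∀ x, s x ≠ 0 := fun x => by rcases hspm x with h | h <;> rw [h] <;> norm_num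
  set A : Matrix (Fin n) (Fin n) ℝ := Matrix.of (fun x y => s x * M x y * s y) with hA
  have hA_apply : ∀ x y, A x y = s x * M x y * s y := fun x y => rfl
  have hA_edge : ∀ x y, G.Adj x y → 0 < A x y := by
    intro x y hxy
    have hMne : M x y ≠ 0 := ((hcompat.1 x y).mp hxy).2
    have hσ1 : σ x y = -(M x y / |M x y|) := hcompat.2 x y hxy
    have hdiv : M x y / |M x y| = s x * s y := by
      have := hsw x y hxy
      rw [hσ1] at this
      linarith
    have hM_eq : M x y = s x * s y * |M x y| := by
      rw [div_eq_iff (abs_ne_zero.mpr hMne)] at hdiv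
      linarith
    have h1 : A x y = (s x * s y) * M x y := by rw [hA_apply]; ring
    rw [hM_eq] at h1
    have h2 : A x y = (s x * s x) * ((s y * s y) * |M x y|) := by rw [h1]; ring
    rw [hs2 x, hs2 y, one_mul, one_mul] at h2
    have h1 := h2
    rw [h1]
    exact abs_pos.mpr hMne
  have hA_off : ∀ x y, x ≠ y → ¬G.Adj x y → A x y = 0 := by
    intro x y hne hnadj
    have : M x y = 0 := by
      by_contra hMne
      exact hnadj ((hcompat.1 x y).mpr ⟨hne, hMne⟩)
    rw [hA_apply, this, mul_zero, zero_mul]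
  have hA_nonneg : ∀ x y, x ≠ y → 0 ≤ A x y := by
    intro x y hne
    by_cases hadj : G.Adj x y
    · exact (hA_edge x y hadj).le
    · rw [hA_off x y hne hadj]
  have htrans : ∀ v : Fin n → ℝ, A *ᵥ v = fun x => s x * (M *ᵥ (fun y => s y * v y)) x := by
    intro v
    funext x
    simp only [Matrix.mulVec, dotProduct, Matrix.of_apply, Finset.mul_sum, hA]
    exact Finset.sum_congr rfl fun y _ => by ring
  have hdot_trans : ∀ v : Fin n → ℝ,
      v ⬝ᵥ (A *ᵥ v) = (fun x => s x * v x) ⬝ᵥ (M *ᵥ (fun y => s y * v y)) := by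
    intro v
    rw [htrans v]
    simp only [dotProduct]
    exact Finset.sum_congr rfl fun x _ => by ring
  have hnorm_trans : ∀ v : Fin n → ℝ,
      (fun x => s x * v x) ⬝ᵥ (fun x => s x * v x) = v ⬝ᵥ v := by
    intro v
    simp only [dotProduct]
    exact Finset.sum_congr rfl fun x _ => by linear_combination (v x * v x) * hs2 x
  have rayA_le : ∀ v : Fin n → ℝ, v ⬝ᵥ (A *ᵥ v) ≤ lam * (v ⬝ᵥ v) := by
    intro v
    rw [hdot_trans v, ← hnorm_trans v]
    exact rayleigh_le M hPSD _
  have rayA_eq : ∀ v : Fin n → ℝ, v ⬝ᵥ (A *ᵥ v) = lam * (v ⬝ᵥ v) → A *ᵥ v = lam • v := by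
    intro v hv
    have hM' : M *ᵥ (fun y => s y * v y) = lam • (fun y => s y * v y) := by
      apply rayleigh_eq_eigen M hPSD
      rw [← hdot_trans v, hnorm_trans v]
      exact hv
    rw [htrans v]
    funext x
    have := congrFun hM' x
    simp only [Pi.smul_apply, smul_eq_mul] at this ⊢
    rw [this]
    linear_combination (lam * v x) * hs2 x
  -- the switched eigenvector
  set w : Fin n → ℝ := fun x => s x * g x with hw
  have hgw : ∀ x, s x * w x = g x := fun x => by
    show s x * (s x * g x) = g x
    linear_combination (g x) * hs2 x
  have hAw : A *ᵥ w = lam • w := by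
    rw [htrans w]
    have hsv : (fun y => s y * w y) = g := funext hgw
    rw [hsv]
    funext x
    rw [heig]
    simp only [Pi.smul_apply, smul_eq_mul]
    ring
  set h : Fin n → ℝ := fun x => |w x| with hh
  have hww : h ⬝ᵥ h = w ⬝ᵥ w := by
    simp only [dotProduct, hh]
    exact Finset.sum_congr rfl fun x _ => abs_mul_abs_self (w x)
  have hexpand : ∀ u : Fin n → ℝ,
      u ⬝ᵥ (A *ᵥ u) = ∑ p ∈ Finset.univ ×ˢ Finset.univ, u p.1 * A p.1 p.2 * u p.2 := by
    intro u
    rw [Finset.sum_product]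
    simp only [dotProduct, Matrix.mulVec, Finset.mul_sum]
    refine Finset.sum_congr rfl fun x _ => ?_
    refine Finset.sum_congr rfl fun y _ => by ring
  have hterm_le : ∀ p ∈ Finset.univ ×ˢ (Finset.univ : Finset (Fin n)),
      w p.1 * A p.1 p.2 * w p.2 ≤ h p.1 * A p.1 p.2 * h p.2 := by
    rintro ⟨x, y⟩ -
    by_cases hxy : x = y
    · subst hxy
      apply le_of_eq
      simp only [hh]
      rw [show |w x| * A x x * |w x| = A x x * (|w x| * |w x|) from by ring,
        abs_mul_abs_self]
      ring
    · have hA0 := hA_nonneg x y hxy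
      simp only [hh]
      calc w x * A x y * w y = A x y * (w x * w y) := by ring
        _ ≤ A x y * |w x * w y| := mul_le_mul_of_nonneg_left (le_abs_self _) hA0
        _ = A x y * (|w x| * |w y|) := by rw [abs_mul]
        _ = |w x| * A x y * |w y| := by ring
  have hwAw : w ⬝ᵥ (A *ᵥ w) = lam * (w ⬝ᵥ w) := by
    rw [hAw]
    simp only [dotProduct, Pi.smul_apply, smul_eq_mul, Finset.mul_sum]
    exact Finset.sum_congr rfl fun x _ => by ring
  have hhAh_ge : lam * (w ⬝ᵥ w) ≤ h ⬝ᵥ (A *ᵥ h) := by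
    rw [← hwAw, hexpand w, hexpand h]
    exact Finset.sum_le_sum hterm_le
  have hhAh_le : h ⬝ᵥ (A *ᵥ h) ≤ lam * (w ⬝ᵥ w) := by
    rw [← hww]
    exact rayA_le h
  have hhAh : h ⬝ᵥ (A *ᵥ h) = lam * (h ⬝ᵥ h) := by rw [hww]; linarith
  have hAh : A *ᵥ h = lam • h := rayA_eq h hhAh
  -- termwise equality
  have hsum_eq : ∑ p ∈ Finset.univ ×ˢ Finset.univ, w p.1 * A p.1 p.2 * w p.2
      = ∑ p ∈ Finset.univ ×ˢ Finset.univ, h p.1 * A p.1 p.2 * h p.2 := by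
    rw [← hexpand w, ← hexpand h, hwAw]
    linarith
  have hterm_eq := (Finset.sum_eq_sum_iff_of_le hterm_le).mp hsum_eq
  -- zero propagation
  have hprop : ∀ x, h x = 0 → ∀ y, G.Adj x y → h y = 0 := by
    intro x hx y hxy
    have hx' := congrFun hAh x
    simp only [Pi.smul_apply, smul_eq_mul, hx, mul_zero] at hx'
    have hsum0 : ∑ z, A x z * h z = 0 := by
      simpa [Matrix.mulVec, dotProduct] using hx'
    have hnonneg : ∀ z ∈ Finset.univ, 0 ≤ A x z * h z := by
      intro z _
      by_cases hzx : x = z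
      · subst hzx; rw [hx, mul_zero]
      · exact mul_nonneg (hA_nonneg x z hzx) (abs_nonneg _)
    have := (Finset.sum_eq_zero_iff_of_nonneg hnonneg).mp hsum0 y (Finset.mem_univ y)
    rcases mul_eq_zero.mp this with h0 | h0
    · exact absurd h0 (ne_of_gt (hA_edge x y hxy))
    · exact h0
  have hallh : ∀ x, h x ≠ 0 := by
    obtain ⟨x0, hx0⟩ := Function.ne_iff.mp hg
    have hhx0 : h x0 ≠ 0 := by
      simp only [hh, hw]
      exact abs_ne_zero.mpr (mul_ne_zero (hsne x0) hx0)
    intro z hz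
    have hwalk : ∀ (a b : Fin n) (p : G.Walk a b), h a = 0 → h b = 0 := by
      intro a b p
      induction p with
      | nil => exact id
      | cons hab p ih => intro h0; exact ih (hprop _ h0 _ hab)
    exact hhx0 (hwalk z x0 ((hconn.preconnected z x0).some) hz)
  have hallg : ∀ x, g x ≠ 0 := by
    intro x hgx
    apply hallh x
    simp only [hh, hw, hgx, mul_zero, abs_zero]
  refine ⟨hallg, ?_⟩
  intro x y hxy
  have heq := hterm_eq ⟨x, y⟩ (by simp [Finset.mem_product])
  have hApos := hA_edge x y hxy
  have hwxy : w x * w y = |w x| * |w y| := by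
    have h2 : A x y * (w x * w y) = A x y * (|w x| * |w y|) := by
      simp only [hh] at heq
      linarith [heq]
    exact mul_left_cancel₀ (ne_of_gt hApos) h2
  have hwpos : 0 < w x * w y := by
    rw [hwxy]
    have hwx : w x ≠ 0 := by
      intro h0; apply hallh x; simp [hh, h0]
    have hwy : w y ≠ 0 := by
      intro h0; apply hallh y; simp [hh, h0]
    exact mul_pos (abs_pos.mpr hwx) (abs_pos.mpr hwy)
  have hσeq : σ x y = -(s x * s y) := by
    have := hsw x y hxy
    linarith
  have hfin : g x * σ x y * g y = -((s x * s x) * ((s y * s y) * (w x * w y))) := by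
    rw [← hgw x, ← hgw y, hσeq]
    ring
  rw [hs2 x, hs2 y, one_mul, one_mul] at hfin
  rw [hfin]
  linarith


section Counting
variable {V : Type*} {G : SimpleGraph V} {σ : V → V → ℝ} {f : V → ℝ}

lemma SConn_symm (hsym : ∀ a b, σ a b = σ b a) {a b : V} (h : SConn G σ f a b) :
    SConn G σ f b a := by
  obtain ⟨l, hlen, hchain, hh, hl⟩ := h
  refine ⟨l.reverse, by simpa using hlen, ?_, by simpa using hl, by simpa using hh⟩
  apply List.isChain_reverse.mpr
  refine hchain.imp fun x y hxy => ?_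
  refine ⟨hxy.1.symm, ?_⟩
  rw [hsym y x, show f y * σ x y * f x = f x * σ x y * f y from by ring]
  exact hxy.2

lemma SConn_trans {a b c : V} (h1 : SConn G σ f a b) (h2 : SConn G σ f b c) :
    SConn G σ f a c := by
  obtain ⟨l₁, h1len, h1c, h1h, h1l⟩ := h1
  obtain ⟨l₂, h2len, h2c, h2h, h2l⟩ := h2
  cases l₂ with
  | nil => simp at h2len
  | cons b' t₂ =>
    have hb : b' = b := by simpa using h2h
    subst hb
    cases t₂ with
    | nil => simp at h2len
    | cons v t₂' =>
      obtain ⟨hstep, h2c'⟩ := List.isChain_cons_cons.mp h2c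
      refine ⟨l₁ ++ v :: t₂', ?_, ?_, ?_, ?_⟩
      · rw [List.length_append]; omega
      · refine List.IsChain.append h1c h2c' ?_
        intro x hx y hy
        have hxb : b' = x := by rw [h1l] at hx; simpa using hx
        have hyv : v = y := by simpa using hy
        rw [← hxb]
        rw [← hyv]
        exact hstep
      · cases l₁ with
        | nil => simp at h1len
        | cons u t₁ => simpa using h1h
      · rw [List.getLast?_append_of_ne_nil _ (by simp), ← List.getLast?_cons_cons (a := b')]
        exact h2l
end Counting

section CountFin
variable {n : ℕ} {G : SimpleGraph (Fin n)} {σ : Fin n → Fin n → ℝ} {f : Fin n → ℝ}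

lemma numStrong_of_P (hP1 : ∀ x, f x ≠ 0)
    (hP2 : ∀ x y, G.Adj x y → f x * σ x y * f y < 0) : numStrong G σ f = n := by
  have hnoS : ∀ a b : Fin n, ¬SConn G σ f a b := by
    rintro a b ⟨l, hlen, hchain, -, -⟩
    cases l with
    | nil => simp at hlen
    | cons u l' =>
      cases l' with
      | nil => simp at hlen
      | cons v t =>
        have hstep := (List.isChain_cons_cons.mp hchain).1
        have := hP2 u v hstep.1
        linarith [hstep.2]
  have hclass : ∀ w, strongClass G σ f w = {w} := by
    intro w
    ext x
    simp only [strongClass, Set.mem_setOf_eq, Set.mem_singleton_iff]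
    constructor
    · rintro ⟨hx, rfl | hS⟩
      · rfl
      · exact absurd hS (hnoS x w)
    · rintro rfl
      exact ⟨hP1 x, Or.inl rfl⟩
  have hdom : strongDomains G σ f = Set.range (fun w : Fin n => ({w} : Set (Fin n))) := by
    ext D
    simp only [strongDomains, Set.mem_setOf_eq, Set.mem_range]
    constructor
    · rintro ⟨w, -, rfl⟩; exact ⟨w, (hclass w).symm⟩
    · rintro ⟨w, rfl⟩; exact ⟨w, hP1 w, (hclass w).symm⟩
  rw [numStrong, hdom, Nat.card_range_of_injective Set.singleton_injective,
    Nat.card_eq_fintype_card, Fintype.card_fin]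

lemma numWeak_of_P (hP1 : ∀ x, f x ≠ 0)
    (hP2 : ∀ x y, G.Adj x y → f x * σ x y * f y < 0) : numWeak G σ f = n := by
  have hnoW : ∀ a b : Fin n, ¬WConn G σ f a b := by
    rintro a b ⟨l, ⟨hlen, hchain, hcond⟩, -, -⟩
    cases l with
    | nil => simp at hlen
    | cons u l' =>
      cases l' with
      | nil => simp at hlen
      | cons v t =>
        have hadj : G.Adj u v := (List.isChain_cons_cons.mp hchain).1
        have h0 : (0 : ℕ) < (u :: v :: t).length := by simp
        have h1 : (1 : ℕ) < (u :: v :: t).length := by simp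
        have key := hcond ⟨0, h0⟩ ⟨1, h1⟩ (by simp [Fin.lt_def]) (hP1 _) (hP1 _) ?_
        · have hg0 : (u :: v :: t).get ⟨0, h0⟩ = u := rfl
          have hg1 : (u :: v :: t).get ⟨1, h1⟩ = v := rfl
          rw [hg0, hg1] at key
          have hTake : (((u :: v :: t).drop 0).take (1 - 0 + 1)) = [u, v] := by simp
          rw [hTake, chainSign_pair] at key
          linarith [hP2 u v hadj]
        · intro k hk1 hk2
          rw [Fin.lt_def] at hk1 hk2
          simp only at hk1 hk2
          omega
  have hclass : ∀ w, weakClass G σ f w = {w} := by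
    intro w
    ext x
    simp only [weakClass, Set.mem_setOf_eq, Set.mem_singleton_iff]
    constructor
    · rintro (⟨hx, rfl | hW⟩ | ⟨u, -, -, hWxu⟩)
      · rfl
      · exact absurd hW (hnoW x w)
      · exact absurd hWxu (hnoW x u)
    · rintro rfl
      exact Or.inl ⟨hP1 x, Or.inl rfl⟩
  have hdom : weakDomains G σ f = Set.range (fun w : Fin n => ({w} : Set (Fin n))) := by
    ext D
    simp only [weakDomains, Set.mem_setOf_eq, Set.mem_range]
    constructor
    · rintro ⟨w, -, rfl⟩; exact ⟨w, (hclass w).symm⟩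
    · rintro ⟨w, rfl⟩; exact ⟨w, hP1 w, (hclass w).symm⟩
  rw [numWeak, hdom, Nat.card_range_of_injective Set.singleton_injective,
    Nat.card_eq_fintype_card, Fintype.card_fin]

lemma P_of_numStrong (hn : 0 < n) (hσ : IsSignature G σ)
    (hcount : numStrong G σ f = n) :
    (∀ x, f x ≠ 0) ∧ (∀ x y, G.Adj x y → f x * σ x y * f y < 0) := by
  classical
  set Ω : Set (Fin n) := {x | f x ≠ 0} with hΩ
  have hinj : Function.Injective
      (fun D : strongDomains G σ f => (⟨D.2.choose, D.2.choose_spec.1⟩ : Ω)) := by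
    intro D₁ D₂ hD
    have h1 := D₁.2.choose_spec.2
    have h2 := D₂.2.choose_spec.2
    have : D₁.2.choose = D₂.2.choose := by
      simpa using congrArg Subtype.val hD
    apply Subtype.ext
    rw [h1, h2, this]
  have hle1 : Nat.card (strongDomains G σ f) ≤ Nat.card Ω :=
    Nat.card_le_card_of_injective _ hinj
  have hle2 : Nat.card Ω ≤ n := by
    have := Nat.card_le_card_of_injective (Subtype.val : Ω → Fin n) Subtype.val_injective
    simpa using this
  rw [numStrong] at hcount
  have hΩcard : Nat.card Ω = n := le_antisymm hle2 (by omega)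
  have hΩuniv : Ω = Set.univ := by
    apply Set.eq_of_subset_of_ncard_le (Set.subset_univ Ω) _ Set.finite_univ
    rw [Set.ncard_univ, ← Nat.card_coe_set_eq, hΩcard]
    simp
  have hP1 : ∀ x, f x ≠ 0 := by
    intro x
    have : x ∈ Ω := hΩuniv ▸ Set.mem_univ x
    exact this
  set ψ : Fin n → strongDomains G σ f :=
    fun x => ⟨strongClass G σ f x, ⟨x, hP1 x, rfl⟩⟩ with hψ
  have hsurj : Function.Surjective ψ := by
    rintro ⟨D, hD⟩
    obtain ⟨w, hw, rfl⟩ := hD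
    exact ⟨w, rfl⟩
  have hbij : Function.Bijective ψ := by
    apply hsurj.bijective_of_nat_card_le
    rw [Nat.card_eq_fintype_card, Fintype.card_fin, hcount]
  refine ⟨hP1, ?_⟩
  intro x y hxy
  have hσne : σ x y ≠ 0 := by rcases hσ.2 x y hxy with h | h <;> rw [h] <;> norm_num
  have hne : f x * σ x y * f y ≠ 0 := mul_ne_zero (mul_ne_zero (hP1 x) hσne) (hP1 y)
  rcases hne.lt_or_gt with hlt | hgt
  · exact hlt
  exfalso
  have hSxy : SConn G σ f x y :=
    ⟨[x, y], by norm_num, List.isChain_pair.mpr ⟨hxy, hgt⟩, rfl, by simp⟩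
  have hSyx : SConn G σ f y x := SConn_symm hσ.1 hSxy
  have hclass : strongClass G σ f x = strongClass G σ f y := by
    ext z
    simp only [strongClass, Set.mem_setOf_eq]
    constructor
    · rintro ⟨hz, rfl | hS⟩
      exacts [⟨hz, Or.inr hSxy⟩, ⟨hz, Or.inr (SConn_trans hS hSxy)⟩]
    · rintro ⟨hz, rfl | hS⟩
      exacts [⟨hz, Or.inr hSyx⟩, ⟨hz, Or.inr (SConn_trans hS hSyx)⟩]
  have hψeq : ψ x = ψ y := Subtype.ext hclass
  exact hxy.ne (hbij.1 hψeq)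

end CountFin


section Charpoly
variable {n : ℕ}

lemma charpoly_conj_unitary (U A : Matrix (Fin n) (Fin n) ℝ) (hUU : U * star U = 1) :
    (U * A * star U).charpoly = A.charpoly := by
  classical
  set φ : Matrix (Fin n) (Fin n) ℝ →+* Matrix (Fin n) (Fin n) ℝ[X] := (Polynomial.C : ℝ →+* ℝ[X]).mapMatrix with hφ
  have hsc : ∀ B : Matrix (Fin n) (Fin n) ℝ[X],
      B * Matrix.scalar (Fin n) X = Matrix.scalar (Fin n) X * B :=
    fun B => ((Matrix.scalar_commute X (fun p => Commute.all X p) B).eq).symm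
  have hleft : φ U * Matrix.scalar (Fin n) X * φ (star U) = Matrix.scalar (Fin n) X := by
    rw [hsc (φ U), mul_assoc, ← _root_.map_mul φ, hUU, _root_.map_one, mul_one]
  have hcm : Matrix.charmatrix (U * A * star U) = φ U * Matrix.charmatrix A * φ (star U) := by
    rw [Matrix.charmatrix, Matrix.charmatrix, ← hφ]
    rw [mul_sub, sub_mul, hleft]
    congr 1
    rw [_root_.map_mul, _root_.map_mul]
  have hdet1 : (φ U).det * (φ (star U)).det = 1 := by
    rw [← Matrix.det_mul, ← _root_.map_mul φ, hUU, _root_.map_one, Matrix.det_one]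
  rw [Matrix.charpoly, Matrix.charpoly, hcm, Matrix.det_mul, Matrix.det_mul]
  calc (φ U).det * (Matrix.charmatrix A).det * (φ (star U)).det
      = (Matrix.charmatrix A).det * ((φ U).det * (φ (star U)).det) := by ring
    _ = (Matrix.charmatrix A).det := by rw [hdet1, mul_one]

lemma charpoly_prod_eigenvalues (M : Matrix (Fin n) (Fin n) ℝ) (hMh : M.IsHermitian) :
    M.charpoly = ∏ i, (Polynomial.X - Polynomial.C (hMh.eigenvalues i)) := by
  classical
  have hspec := hMh.spectral_theorem
  have hUU : (hMh.eigenvectorUnitary : Matrix (Fin n) (Fin n) ℝ)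
      * star (hMh.eigenvectorUnitary : Matrix (Fin n) (Fin n) ℝ) = 1 :=
    Matrix.mem_unitaryGroup_iff.mp hMh.eigenvectorUnitary.2
  have hofReal : (RCLike.ofReal ∘ hMh.eigenvalues : Fin n → ℝ) = hMh.eigenvalues := by
    funext i; simp [RCLike.ofReal]
  have h1 : M.charpoly
      = (Matrix.diagonal (RCLike.ofReal ∘ hMh.eigenvalues) : Matrix (Fin n) (Fin n) ℝ).charpoly := by
    conv_lhs => rw [hspec]
    exact charpoly_conj_unitary _ _ hUU
  rw [h1, Matrix.charpoly_of_upperTriangular _ (Matrix.blockTriangular_diagonal _)]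
  refine Finset.prod_congr rfl fun i _ => ?_
  rw [Matrix.diagonal_apply_eq, hofReal]
end Charpoly


lemma mult_one {n : ℕ} (hn : 0 < n) (G : SimpleGraph (Fin n)) (σ : Fin n → Fin n → ℝ)
    (hconn : G.Connected)
    (M : Matrix (Fin n) (Fin n) ℝ) (hM : M.IsSymm) (hcompat : Compatible M G σ)
    (μ : Fin n → ℝ) (hmono : Monotone μ)
    (hchar : M.charpoly = ∏ i, (Polynomial.X - Polynomial.C (μ i)))
    (s : Fin n → ℝ) (hspm : ∀ x, s x = 1 ∨ s x = -1)
    (hsw : ∀ x y, G.Adj x y → -(σ x y) = s x * s y) :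
    Nat.card {i : Fin n | μ i = μ ⟨n - 1, Nat.sub_lt hn one_pos⟩} = 1 := by
  classical
  set lam := μ ⟨n - 1, Nat.sub_lt hn one_pos⟩ with hlam
  have hMh := isHermitian_of_isSymm M hM
  set E := hMh.eigenvalues with hE
  have hcp : ∏ i, (Polynomial.X - Polynomial.C (μ i))
      = ∏ i, (Polynomial.X - Polynomial.C (E i)) := by
    rw [← hchar, charpoly_prod_eigenvalues M hMh]
  have hms : Finset.univ.val.map μ = Finset.univ.val.map E := by
    have h1 : ((Finset.univ.val.map μ).map (fun a : ℝ => Polynomial.X - Polynomial.C a)).prod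
        = ((Finset.univ.val.map E).map (fun a : ℝ => Polynomial.X - Polynomial.C a)).prod := by
      rw [Multiset.map_map, Multiset.map_map]
      exact hcp
    calc Finset.univ.val.map μ
        = ((Finset.univ.val.map μ).map (fun a : ℝ => Polynomial.X - Polynomial.C a)).prod.roots :=
          (Polynomial.roots_multiset_prod_X_sub_C _).symm
      _ = ((Finset.univ.val.map E).map (fun a : ℝ => Polynomial.X - Polynomial.C a)).prod.roots :=
          by rw [h1]
      _ = Finset.univ.val.map E := Polynomial.roots_multiset_prod_X_sub_C _
  have hcnt : (Finset.univ.filter (fun i => lam = μ i)).card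
      = (Finset.univ.filter (fun i => lam = E i)).card := by
    have h2 := congrArg (Multiset.count lam) hms
    rwa [Multiset.count_map, Multiset.count_map] at h2
  have hsetfin : {i : Fin n | μ i = lam} = ↑(Finset.univ.filter (fun i => lam = μ i)) := by
    ext i; simp [eq_comm]
  rw [hsetfin, Nat.card_coe_set_eq, Set.ncard_coe_finset, hcnt]
  have hmem : (⟨n - 1, Nat.sub_lt hn one_pos⟩ : Fin n) ∈ Finset.univ.filter (fun i => lam = μ i) := by
    simp [hlam]
  have hEne : (Finset.univ.filter (fun i => lam = E i)).Nonempty := by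
    rw [← Finset.card_pos, ← hcnt]
    exact Finset.card_pos.mpr ⟨_, hmem⟩
  obtain ⟨i₀, hi₀⟩ := hEne
  rw [Finset.card_eq_one]
  refine ⟨i₀, Finset.eq_singleton_iff_unique_mem.mpr ⟨hi₀, ?_⟩⟩
  intro j hj
  by_contra hji
  have hji' : j ≠ i₀ := hji
  set b := hMh.eigenvectorBasis with hb
  have hi₀E : lam = E i₀ := (Finset.mem_filter.mp hi₀).2
  have hjE : lam = E j := (Finset.mem_filter.mp hj).2
  have hnz : ∀ k : Fin n, (⇑(b k) : Fin n → ℝ) ≠ 0 := by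
    intro k h0
    have hnorm := b.orthonormal.1 k
    have hbk : b k = 0 := PiLp.ext fun x => congrFun h0 x
    rw [hbk] at hnorm
    simp at hnorm
  have hb0 : M *ᵥ ⇑(b i₀) = lam • ⇑(b i₀) := by
    rw [hb, hMh.mulVec_eigenvectorBasis, ← hE, ← hi₀E]
  have hbj : M *ᵥ ⇑(b j) = lam • ⇑(b j) := by
    rw [hb, hMh.mulVec_eigenvectorBasis, ← hE, ← hjE]
  have hpf0 := pf_structure hn G σ hconn M hM hcompat μ hmono hchar s hspm hsw
    (⇑(b i₀)) (hnz i₀) hb0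
  have hpfj := pf_structure hn G σ hconn M hM hcompat μ hmono hchar s hspm hsw
    (⇑(b j)) (hnz j) hbj
  set x0 : Fin n := ⟨0, hn⟩ with hx0def
  set v : Fin n → ℝ :=
    fun x => (⇑(b j) x0) * (⇑(b i₀) x) - (⇑(b i₀) x0) * (⇑(b j) x) with hv
  have hvdecomp : v = (⇑(b j) x0) • (⇑(b i₀) : Fin n → ℝ)
      - (⇑(b i₀) x0) • (⇑(b j) : Fin n → ℝ) := by
    funext x; simp [hv]
  have hveig : M *ᵥ v = lam • v := by
    rw [hvdecomp, Matrix.mulVec_sub, Matrix.mulVec_smul, Matrix.mulVec_smul, hb0, hbj,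
      smul_comm (⇑(b j) x0) lam, smul_comm (⇑(b i₀) x0) lam, smul_sub]
  have hvx0 : v x0 = 0 := by simp [hv]; ring
  have hv0 : v = 0 := by
    by_contra hvne
    exact (pf_structure hn G σ hconn M hM hcompat μ hmono hchar s hspm hsw v hvne hveig).1
      x0 hvx0
  have hpropeq : ∀ x, ⇑(b j) x0 * ⇑(b i₀) x = ⇑(b i₀) x0 * ⇑(b j) x := by
    intro x
    have h3 := congrFun hv0 x
    simp only [hv, Pi.zero_apply] at h3
    linarith
  have hsum : ⇑(b j) x0 * (∑ x, ⇑(b i₀) x * ⇑(b i₀) x)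
      = ⇑(b i₀) x0 * (∑ x, ⇑(b j) x * ⇑(b i₀) x) := by
    rw [Finset.mul_sum, Finset.mul_sum]
    exact Finset.sum_congr rfl fun x _ => by
      linear_combination (⇑(b i₀) x) * hpropeq x
  have hnorm1 : (∑ x, ⇑(b i₀) x * ⇑(b i₀) x) = 1 := by
    have h4 : ⟪b i₀, b i₀⟫ = (1 : ℝ) := by
      have h5 := b.orthonormal.1 i₀
      rw [real_inner_self_eq_norm_mul_norm, h5, mul_one]
    rw [← h4, PiLp.inner_apply]
    simp [RCLike.inner_apply, sq]
  have hzero : (∑ x, ⇑(b j) x * ⇑(b i₀) x) = 0 := by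
    have h6 : ⟪b j, b i₀⟫ = (0 : ℝ) := b.orthonormal.2 hji'
    rw [← h6, PiLp.inner_apply]
    simp [RCLike.inner_apply, mul_comm]
  rw [hnorm1, hzero, mul_one, mul_zero] at hsum
  exact (hpfj.1 x0) hsum


/-- a connected signed graph is antibalanced iff 𝔚(f_n) = 𝔖(f_n) = n for an
eigenvector f_n of the largest eigenvalue of any compatible symmetric matrix; moreover in
the antibalanced case the largest eigenvalue is simple. -/
theorem stmt_4 (n : ℕ) (hn : 0 < n) (G : SimpleGraph (Fin n)) (σ : Fin n → Fin n → ℝ)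
    (hσ : IsSignature G σ) (hconn : G.Connected)
    (M : Matrix (Fin n) (Fin n) ℝ) (hM : M.IsSymm) (hcompat : Compatible M G σ)
    (μ : Fin n → ℝ) (hmono : Monotone μ)
    (hchar : M.charpoly = ∏ i, (Polynomial.X - Polynomial.C (μ i)))
    (f : Fin n → ℝ) (hf : f ≠ 0)
    (heig : M.mulVec f = μ ⟨n - 1, by omega⟩ • f) :
    (IsAntibalanced G σ ↔ (numWeak G σ f = n ∧ numStrong G σ f = n)) ∧
    (IsAntibalanced G σ → Nat.card {i : Fin n | μ i = μ ⟨n - 1, by omega⟩} = 1) := by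
  classical
  have hswitch : IsAntibalanced G σ → ∃ s : Fin n → ℝ, (∀ x, s x = 1 ∨ s x = -1) ∧
      ∀ x y, G.Adj x y → -(σ x y) = s x * s y := by
    intro hanti
    refine exists_switching hconn ?_ ?_ hanti
    · intro a b hab
      rcases hσ.2 a b hab with h1 | h1 <;> rw [h1] <;> norm_num
    · intro a b
      rw [hσ.1 a b]
  have hP_of_anti : IsAntibalanced G σ →
      (∀ x, f x ≠ 0) ∧ (∀ x y, G.Adj x y → f x * σ x y * f y < 0) := by
    intro hanti
    obtain ⟨s, hspm, hsw⟩ := hswitch hanti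
    exact pf_structure hn G σ hconn M hM hcompat μ hmono hchar s hspm hsw f hf heig
  constructor
  · constructor
    · intro hanti
      obtain ⟨hP1, hP2⟩ := hP_of_anti hanti
      exact ⟨numWeak_of_P hP1 hP2, numStrong_of_P hP1 hP2⟩
    · rintro ⟨-, hS⟩
      obtain ⟨hP1, hP2⟩ := P_of_numStrong hn hσ hS
      intro x p hp
      set g : Fin n → ℝ := fun v => if 0 < f v then 1 else -1 with hg
      have hg2 : ∀ v, g v * g v = 1 := by
        intro v
        by_cases h : 0 < f v <;> simp [hg, h]
      have hagree : ∀ a b, G.Adj a b →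
          (fun x y => -(σ x y)) a b = (fun x y : Fin n => g x * g y) a b := by
        intro a b hab
        have hfa := hP1 a
        have hfb := hP1 b
        have hP2ab := hP2 a b hab
        simp only
        rcases hσ.2 a b hab with h1 | h1 <;> rw [h1] <;> rw [h1] at hP2ab
        · by_cases ha : 0 < f a
          · by_cases hb0 : 0 < f b
            · exfalso; nlinarith
            · norm_num [hg, ha, hb0]
          · by_cases hb0 : 0 < f b
            · norm_num [hg, ha, hb0]
            · exfalso
              have ha' : f a < 0 := lt_of_le_of_ne (not_lt.mp ha) hfa
              have hb' : f b < 0 := lt_of_le_of_ne (not_lt.mp hb0) hfb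
              nlinarith
        · by_cases ha : 0 < f a
          · by_cases hb0 : 0 < f b
            · norm_num [hg, ha, hb0]
            · exfalso
              have hb' : f b < 0 := lt_of_le_of_ne (not_lt.mp hb0) hfb
              nlinarith
          · by_cases hb0 : 0 < f b
            · exfalso
              have ha' : f a < 0 := lt_of_le_of_ne (not_lt.mp ha) hfa
              nlinarith
            · norm_num [hg, ha, hb0]
      rw [chainSign_congr hagree p.support p.isChain_adj_support]
      have hhead : p.support.head? = some x := by
        rw [SimpleGraph.Walk.support_eq_cons p]; rfl
      have hlast : p.support.getLast? = some x := support_getLast? p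
      rw [chainSign_mul_self g hg2 p.support x x hhead hlast]
      exact hg2 x
  · intro hanti
    obtain ⟨s, hspm, hsw⟩ := hswitch hanti
    exact mult_one hn G σ hconn M hM hcompat μ hmono hchar s hspm hsw
end

section
/- Let Γ = (G,σ) be a signed graph where G = (V,E) is a forest with |V| = n. For any function f : V → ℝ, one has 𝔖(f) + 𝔖̄(f) = n + c − 2z + e_0, where 𝔖̄(f) is the number of strong nodal domains of f on the negation −Γ = (G,−σ), z = |{x ∈ V : f(x) = 0}|, e_0 = |{{x,y} ∈ E : f(x) = 0 or f(y) = 0}|, and c is the number of connected components of G. -/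
open Matrix Polynomial

section AuxProof

open SimpleGraph

variable {V : Type*}

/-! ### Generic walk/chain helpers -/

lemma reachable_of_chain' {H : SimpleGraph V} :
    ∀ (l : List V), l.Chain' H.Adj → ∀ x y : V, l.head? = some x → l.getLast? = some y →
      H.Reachable x y
  | [], _, x, y, hx, _ => by simp at hx
  | [a], _, x, y, hx, hy => by
      simp only [List.head?_cons, Option.some.injEq] at hx
      simp only [List.getLast?_singleton, Option.some.injEq] at hy
      subst hx; subst hy
      exact Reachable.refl _
  | a :: b :: l, hc, x, y, hx, hy => by
      obtain ⟨hab, hc'⟩ := List.isChain_cons_cons.mp hc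
      simp only [List.head?_cons, Option.some.injEq] at hx
      have hrest : H.Reachable b y :=
        reachable_of_chain' (b :: l) hc' b y rfl (by
          rw [← hy, List.getLast?_cons_cons])
      exact hx ▸ (hab.reachable.trans hrest)

/-! ### Deleting a bridge increases the component count by one. -/

lemma reach_split {G : SimpleGraph V} {x y : V}
    (hnr : ¬ (G.deleteEdges {s(x, y)}).Reachable x y) {u v : V} (p : G.Walk u v) :
    (G.deleteEdges {s(x, y)}).Reachable u v ∨
    ((G.deleteEdges {s(x, y)}).Reachable u x ∧ (G.deleteEdges {s(x, y)}).Reachable y v) ∨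
    ((G.deleteEdges {s(x, y)}).Reachable u y ∧ (G.deleteEdges {s(x, y)}).Reachable x v) := by
  induction p with
  | nil => exact Or.inl (Reachable.refl _)
  | @cons u w v h q ih =>
    by_cases he : s(u, w) = s(x, y)
    · rw [Sym2.eq_iff] at he
      rcases he with ⟨rfl, rfl⟩ | ⟨rfl, rfl⟩
      · rcases ih with h1 | ⟨h2, _⟩ | ⟨_, h5⟩
        · exact Or.inr (Or.inl ⟨Reachable.refl _, h1⟩)
        · exact absurd h2.symm hnr
        · exact Or.inl h5
      · rcases ih with h1 | ⟨_, h3⟩ | ⟨h4, _⟩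
        · exact Or.inr (Or.inr ⟨Reachable.refl _, h1⟩)
        · exact Or.inl h3
        · exact absurd h4 hnr
    · have hadj : (G.deleteEdges {s(x, y)}).Adj u w := by
        rw [deleteEdges_adj]
        exact ⟨h, by simpa using he⟩
      rcases ih with h1 | ⟨h2, h3⟩ | ⟨h4, h5⟩
      · exact Or.inl (hadj.reachable.trans h1)
      · exact Or.inr (Or.inl ⟨hadj.reachable.trans h2, h3⟩)
      · exact Or.inr (Or.inr ⟨hadj.reachable.trans h4, h5⟩)

lemma card_cc_deleteEdge [Fintype V] {G : SimpleGraph V} {x y : V} (hadj : G.Adj x y)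
    (hnr : ¬ (G.deleteEdges {s(x, y)}).Reachable x y) :
    Nat.card (G.deleteEdges {s(x, y)}).ConnectedComponent
      = Nat.card G.ConnectedComponent + 1 := by
  classical
  have hle : G.deleteEdges {s(x, y)} ≤ G := deleteEdges_le _
  letI : Fintype (G.deleteEdges {s(x, y)}).ConnectedComponent := Fintype.ofFinite _
  letI : Fintype G.ConnectedComponent := Fintype.ofFinite _
  set φ : (G.deleteEdges {s(x, y)}).ConnectedComponent → G.ConnectedComponent :=
    ConnectedComponent.map (Hom.ofLE hle) with hφdef
  have hφ : ∀ v : V, φ ((G.deleteEdges {s(x, y)}).connectedComponentMk v)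
      = G.connectedComponentMk v := fun v => rfl
  have key : ∀ C : G.ConnectedComponent,
      (Finset.univ.filter (fun D => φ D = C)).card
        = if C = G.connectedComponentMk x then 2 else 1 := by
    intro C
    split_ifs with hC
    · subst hC
      have hset : Finset.univ.filter (fun D => φ D = G.connectedComponentMk x)
          = {(G.deleteEdges {s(x, y)}).connectedComponentMk x,
             (G.deleteEdges {s(x, y)}).connectedComponentMk y} := by
        ext D
        induction D using ConnectedComponent.ind with
        | _ u =>
          simp only [Finset.mem_filter, Finset.mem_univ, true_and, Finset.mem_insert,
            Finset.mem_singleton, hφ, ConnectedComponent.eq]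
          constructor
          · intro h
            rcases reach_split hnr h.some with h1 | ⟨h2, _⟩ | ⟨h4, _⟩
            · exact Or.inl h1
            · exact Or.inl h2
            · exact Or.inr h4
          · rintro (h | h)
            · exact h.mono hle
            · exact (h.mono hle).trans hadj.symm.reachable
      rw [hset, Finset.card_insert_of_notMem, Finset.card_singleton]
      simp only [Finset.mem_singleton]
      intro h
      exact hnr (ConnectedComponent.eq.mp h)
    · obtain ⟨v, hv⟩ := C.exists_rep
      have hvx : ¬ G.Reachable v x := fun h => hC (hv ▸ ConnectedComponent.eq.mpr h)
      rw [Finset.card_eq_one]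
      refine ⟨(G.deleteEdges {s(x, y)}).connectedComponentMk v, ?_⟩
      ext D
      induction D using ConnectedComponent.ind with
      | _ u =>
        simp only [Finset.mem_filter, Finset.mem_univ, true_and, Finset.mem_singleton]
        rw [hφ, ← hv,
          show (Quot.mk G.Reachable v : G.ConnectedComponent) = G.connectedComponentMk v from rfl,
          ConnectedComponent.eq, ConnectedComponent.eq]
        constructor
        · intro h
          rcases reach_split hnr h.some with h1 | ⟨_, h3⟩ | ⟨_, h5⟩
          · exact h1
          · exact absurd ((h3.mono hle).symm.trans hadj.symm.reachable) hvx
          · exact absurd (h5.mono hle).symm hvx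
        · intro h
          exact h.mono hle
  have hcount := Finset.card_eq_sum_card_fiberwise
    (f := φ) (s := Finset.univ) (t := Finset.univ) (fun a _ => Finset.mem_univ (φ a))
  rw [Nat.card_eq_fintype_card, Nat.card_eq_fintype_card, ← Finset.card_univ, hcount]
  have : ∀ C : G.ConnectedComponent,
      (Finset.univ.filter (fun D => φ D = C)).card
        = 1 + if C = G.connectedComponentMk x then 1 else 0 := by
    intro C; rw [key C]; split_ifs <;> rfl
  rw [Finset.sum_congr rfl (fun C _ => this C), Finset.sum_add_distrib, Finset.sum_const,
    Finset.sum_ite_eq' Finset.univ (G.connectedComponentMk x) (fun _ => 1)]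
  simp [Finset.card_univ, Nat.card_eq_fintype_card]

/-! ### Euler formula for forests -/

lemma forest_card [Fintype V] : ∀ (n : ℕ) (G : SimpleGraph V), G.IsAcyclic →
    Nat.card G.edgeSet = n → n + Nat.card G.ConnectedComponent = Fintype.card V := by
  intro n
  induction n with
  | zero =>
    intro G _ hcard
    have hempty : G.edgeSet = ∅ := by
      rw [← Set.isEmpty_coe_sort]
      rcases Nat.card_eq_zero.mp hcard with h | h
      · exact h
      · exact absurd h (not_infinite_iff_finite.mpr (Set.toFinite _))
    have hbot : G = ⊥ := edgeSet_eq_empty.mp hempty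
    subst hbot
    have hbij : Function.Bijective ((⊥ : SimpleGraph V).connectedComponentMk) := by
      constructor
      · intro a b h
        exact reachable_bot.mp (ConnectedComponent.eq.mp h)
      · intro C
        obtain ⟨v, rfl⟩ := C.exists_rep
        exact ⟨v, rfl⟩
    rw [zero_add, ← Nat.card_eq_of_bijective _ hbij, Nat.card_eq_fintype_card]
  | succ n ih =>
    intro G hG hcard
    have hne : G.edgeSet.Nonempty := by
      rw [Set.nonempty_iff_ne_empty]
      intro h
      rw [Nat.card_coe_set_eq, h, Set.ncard_empty] at hcard
      exact Nat.succ_ne_zero n hcard.symm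
    obtain ⟨e, he⟩ := hne
    revert he
    induction e using Sym2.ind with
    | _ x y =>
      intro he
      have hadj : G.Adj x y := he
      have hbr : ¬ (G.deleteEdges {s(x, y)}).Reachable x y :=
        ((isBridge_iff).mp ((isAcyclic_iff_forall_adj_isBridge.mp hG) hadj))
      have hG'ac : (G.deleteEdges {s(x, y)}).IsAcyclic := fun v c hc =>
        hG (c.mapLe (deleteEdges_le _)) (hc.mapLe _)
      have hG'card : Nat.card (G.deleteEdges {s(x, y)}).edgeSet = n := by
        rw [Nat.card_coe_set_eq] at hcard ⊢
        rw [edgeSet_deleteEdges, Set.ncard_diff_singleton_of_mem he, hcard]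
        omega
      have hih := ih (G.deleteEdges {s(x, y)}) hG'ac hG'card
      have hcc := card_cc_deleteEdge hadj hbr
      omega

end AuxProof

section AuxProof2

open SimpleGraph

variable {V : Type*} {G : SimpleGraph V} {σ : V → V → ℝ} {f : V → ℝ}

lemma posSubgraph_le : posSubgraph G σ f ≤ G := fun _ _ h => h.1

lemma fx_ne_zero_of_adj {x y : V} (h : (posSubgraph G σ f).Adj x y) : f x ≠ 0 := by
  intro h0
  have hp := h.2.1
  rw [h0, zero_mul, zero_mul] at hp
  exact lt_irrefl 0 hp

lemma eq_of_reachable_of_zero {x y : V} (h0 : f x = 0)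
    (h : (posSubgraph G σ f).Reachable x y) : x = y := by
  obtain ⟨p⟩ := h
  cases p with
  | nil => rfl
  | cons h q => exact absurd h0 (fx_ne_zero_of_adj h)

lemma swalkstep_iff (hsym : ∀ a b : V, σ a b = σ b a) {u v : V} :
    SWalkStep G σ f u v ↔ (posSubgraph G σ f).Adj u v := by
  constructor
  · rintro ⟨ha, hp⟩
    refine ⟨ha, hp, ?_⟩
    rw [hsym v u]
    have : f v * σ u v * f u = f u * σ u v * f v := by ring
    rw [this]
    exact hp
  · rintro ⟨ha, hp, _⟩
    exact ⟨ha, hp⟩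

lemma sconn_reachable (hsym : ∀ a b : V, σ a b = σ b a) {x y : V} (h : SConn G σ f x y) :
    (posSubgraph G σ f).Reachable x y := by
  obtain ⟨l, _, hc, hx, hy⟩ := h
  exact reachable_of_chain' l (hc.imp (fun a b hab => (swalkstep_iff hsym).mp hab)) x y hx hy

lemma reachable_sconn (hsym : ∀ a b : V, σ a b = σ b a) {x y : V} (hxy : x ≠ y)
    (h : (posSubgraph G σ f).Reachable x y) : SConn G σ f x y := by
  obtain ⟨p⟩ := h
  refine ⟨p.support, ?_, ?_, ?_, ?_⟩
  · rw [Walk.length_support]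
    have : p.length ≠ 0 := fun h0 => hxy (Walk.eq_of_length_eq_zero h0)
    omega
  · exact (Walk.isChain_adj_support p).imp (fun a b hab => (swalkstep_iff hsym).mpr hab)
  · rw [p.support_eq_cons]; rfl
  · rw [List.getLast?_eq_getLast p.support_ne_nil, Walk.getLast_support]

lemma strongClass_eq (hsym : ∀ a b : V, σ a b = σ b a) {w : V} (hw : f w ≠ 0) :
    strongClass G σ f w = ((posSubgraph G σ f).connectedComponentMk w).supp := by
  ext x
  rw [ConnectedComponent.mem_supp_iff, ConnectedComponent.eq]
  simp only [strongClass, Set.mem_setOf_eq]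
  constructor
  · rintro ⟨hx, rfl | hs⟩
    · exact Reachable.refl _
    · exact sconn_reachable hsym hs
  · intro hr
    by_cases hxw : x = w
    · exact ⟨hxw ▸ hw, Or.inl hxw⟩
    · refine ⟨?_, Or.inr (reachable_sconn hsym hxw hr)⟩
      obtain ⟨p⟩ := hr
      cases p with
      | nil => exact absurd rfl hxw
      | cons h q => exact fx_ne_zero_of_adj h

lemma numStrong_card [Fintype V] (hsym : ∀ a b : V, σ a b = σ b a) :
    numStrong G σ f + Nat.card {x : V | f x = 0}
      = Nat.card (posSubgraph G σ f).ConnectedComponent := by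
  classical
  set H := posSubgraph G σ f with hH
  set S : Set H.ConnectedComponent :=
    {C | ∃ w, f w ≠ 0 ∧ C = H.connectedComponentMk w} with hS
  have hdom : strongDomains G σ f = ConnectedComponent.supp '' S := by
    ext D
    simp only [strongDomains, Set.mem_setOf_eq, Set.mem_image, hS]
    constructor
    · rintro ⟨w, hw, rfl⟩
      exact ⟨H.connectedComponentMk w, ⟨w, hw, rfl⟩, (strongClass_eq hsym hw).symm⟩
    · rintro ⟨C, ⟨w, hw, rfl⟩, rfl⟩
      exact ⟨w, hw, (strongClass_eq hsym hw).symm⟩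
  have h1 : numStrong G σ f = S.ncard := by
    rw [numStrong, Nat.card_coe_set_eq, hdom,
      Set.ncard_image_of_injective S ConnectedComponent.supp_injective]
  have hcompl : Sᶜ = H.connectedComponentMk '' {x : V | f x = 0} := by
    ext C
    simp only [Set.mem_compl_iff, hS, Set.mem_setOf_eq, Set.mem_image, not_exists]
    constructor
    · intro hC
      obtain ⟨v, hv⟩ := C.exists_rep
      have hv' : C = H.connectedComponentMk v := hv.symm
      by_cases h0 : f v = 0
      · exact ⟨v, h0, hv⟩
      · exact absurd ⟨h0, hv'⟩ (hC v)
    · rintro ⟨v, h0, rfl⟩ w ⟨hw1, hEq⟩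
      have hvw : v = w := eq_of_reachable_of_zero h0 (ConnectedComponent.eq.mp hEq)
      exact hw1 (hvw ▸ h0)
  have h2 : Sᶜ.ncard = Nat.card {x : V | f x = 0} := by
    rw [hcompl, Nat.card_coe_set_eq]
    exact Set.ncard_image_of_injOn (fun a ha b hb hab =>
      eq_of_reachable_of_zero ha (ConnectedComponent.eq.mp hab))
  rw [h1, ← h2, ← Nat.card_coe_set_eq, ← Nat.card_coe_set_eq,
    Nat.card_coe_set_eq, Nat.card_coe_set_eq]
  exact Set.ncard_add_ncard_compl S

lemma posSubgraph_acyclic (hG : G.IsAcyclic) : (posSubgraph G σ f).IsAcyclic :=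
  fun _ c hc => hG (c.mapLe posSubgraph_le) (hc.mapLe _)

lemma edge_partition [Fintype V] (hσ : IsSignature G σ) :
    Nat.card (posSubgraph G σ f).edgeSet
      + Nat.card (posSubgraph G (fun x y => -(σ x y)) f).edgeSet
      + Nat.card {e : Sym2 V | e ∈ G.edgeSet ∧ ∃ x ∈ e, f x = 0}
      = Nat.card G.edgeSet := by
  classical
  set A := (posSubgraph G σ f).edgeSet with hA
  set B := (posSubgraph G (fun x y => -(σ x y)) f).edgeSet with hB
  set Z := {e : Sym2 V | e ∈ G.edgeSet ∧ ∃ x ∈ e, f x = 0} with hZ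
  have hunion : A ∪ (B ∪ Z) = G.edgeSet := by
    ext e
    induction e using Sym2.ind with
    | _ x y =>
      simp only [hA, hB, hZ, Set.mem_union, Set.mem_setOf_eq, mem_edgeSet, Sym2.mem_iff]
      constructor
      · rintro (h | h | h)
        · exact h.1
        · exact h.1
        · exact h.1
      · intro h
        by_cases h0 : f x = 0 ∨ f y = 0
        · refine Or.inr (Or.inr ⟨h, ?_⟩)
          rcases h0 with h0 | h0
          · exact ⟨x, Or.inl rfl, h0⟩
          · exact ⟨y, Or.inr rfl, h0⟩
        · push_neg at h0
          obtain ⟨hx0, hy0⟩ := h0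
          have hσne : σ x y ≠ 0 := by
            rcases hσ.2 x y h with h1 | h1 <;> rw [h1] <;> norm_num
          have hne : f x * σ x y * f y ≠ 0 := mul_ne_zero (mul_ne_zero hx0 hσne) hy0
          rcases hne.lt_or_gt with hlt | hgt
          · refine Or.inr (Or.inl ⟨h, ?_, ?_⟩)
            · have : f x * -σ x y * f y = -(f x * σ x y * f y) := by ring
              rw [this]; linarith
            · have : f y * -σ y x * f x = -(f x * σ x y * f y) := by
                rw [hσ.1 y x]; ring
              rw [this]; linarith
          · refine Or.inl ⟨h, hgt, ?_⟩
            have : f y * σ y x * f x = f x * σ x y * f y := by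
              rw [hσ.1 y x]; ring
            rw [this]; exact hgt
  have hAnz : ∀ e ∈ A, e ∉ Z := by
    intro e
    induction e using Sym2.ind with
    | _ x y =>
      rintro hA' ⟨_, w, hw, hw0⟩
      have hp := hA'.2.1
      rw [Sym2.mem_iff] at hw
      rcases hw with rfl | rfl
      · rw [hw0, zero_mul, zero_mul] at hp; exact lt_irrefl 0 hp
      · rw [hw0, mul_zero] at hp; exact lt_irrefl 0 hp
  have hBnz : ∀ e ∈ B, e ∉ Z := by
    intro e
    induction e using Sym2.ind with
    | _ x y =>
      rintro hB' ⟨_, w, hw, hw0⟩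
      have hp := hB'.2.1
      rw [Sym2.mem_iff] at hw
      rcases hw with rfl | rfl
      · rw [hw0, zero_mul, zero_mul] at hp; exact lt_irrefl 0 hp
      · rw [hw0, mul_zero] at hp; exact lt_irrefl 0 hp
  have hAB : ∀ e ∈ A, e ∉ B := by
    intro e
    induction e using Sym2.ind with
    | _ x y =>
      intro hA' hB'
      have h1 := hA'.2.1
      have h2 := hB'.2.1
      have : f x * -σ x y * f y = -(f x * σ x y * f y) := by ring
      rw [this] at h2
      linarith
  have hd1 : Disjoint A (B ∪ Z) := by
    rw [Set.disjoint_left]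
    rintro e heA (heB | heZ)
    · exact hAB e heA heB
    · exact hAnz e heA heZ
  have hd2 : Disjoint B Z := by
    rw [Set.disjoint_left]
    exact fun e heB heZ => hBnz e heB heZ
  simp only [Nat.card_coe_set_eq]
  rw [← hunion, Set.ncard_union_eq hd1 (Set.toFinite _) (Set.toFinite _),
    Set.ncard_union_eq hd2 (Set.toFinite _) (Set.toFinite _)]
  ring

end AuxProof2


/-- duality on forests, 𝔖(f) + 𝔖̄(f) = n + c - 2z + e₀. -/
theorem stmt_6 {V : Type*} [Fintype V] (G : SimpleGraph V) (hforest : G.IsAcyclic)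
    (σ : V → V → ℝ) (hσ : IsSignature G σ) (f : V → ℝ) :
    numStrong G σ f + numStrong G (fun x y => -(σ x y)) f + 2 * Nat.card {x : V | f x = 0}
      = Fintype.card V + Nat.card G.ConnectedComponent
        + Nat.card {e : Sym2 V | e ∈ G.edgeSet ∧ ∃ x ∈ e, f x = 0} := by
  obtain ⟨hsym, hpm⟩ := hσ
  have hsym' : ∀ a b : V, -(σ a b) = -(σ b a) := fun a b => by rw [hsym a b]
  have e1 := numStrong_card (G := G) (σ := σ) (f := f) hsym
  have e2 := numStrong_card (G := G) (σ := fun x y => -(σ x y)) (f := f) hsym'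
  have e3 := forest_card (Nat.card (posSubgraph G σ f).edgeSet) (posSubgraph G σ f)
    (posSubgraph_acyclic hforest) rfl
  have e4 := forest_card (Nat.card (posSubgraph G (fun x y => -(σ x y)) f).edgeSet)
    (posSubgraph G (fun x y => -(σ x y)) f) (posSubgraph_acyclic hforest) rfl
  have e5 := forest_card (Nat.card G.edgeSet) G hforest rfl
  have e6 := edge_partition (f := f) ⟨hsym, hpm⟩
  omega
end

section
/- Let Γ = (G,σ) be a connected signed graph. Then there exists a real symmetric matrix M compatible with Γ such that the smallest eigenvalue λ_1 of M is simple and the corresponding eigenvector f_1 is nonzero at every vertex; moreover 𝔖(f_1) = 1, i.e., the unique strong nodal domain of f_1 is the whole graph G. -/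
open Matrix Polynomial

section MyAux
variable {V : Type*} [DecidableEq V]

lemma descent_ind (r : V) (p : V → V) (d : V → ℕ) (hd : ∀ x, x ≠ r → d (p x) < d x)
    (P : V → Prop) (base : P r) (step : ∀ x, x ≠ r → P (p x) → P x) (x : V) : P x := by
  have H : ∀ n, ∀ x, d x < n → P x := by
    intro n
    induction n with
    | zero => intro x hx; exact absurd hx (Nat.not_lt_zero _)
    | succ n ih =>
      intro x hx
      by_cases hr : x = r
      · exact hr ▸ base
      · exact step x hr (ih _ (by have := hd x hr; omega))
  exact H (d x + 1) x (Nat.lt_succ_self _)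

noncomputable def signFun (σ : V → V → ℝ) (r : V) (p : V → V) (d : V → ℕ)
    (hd : ∀ x, x ≠ r → d (p x) < d x) (x : V) : ℝ :=
  if h : x = r then 1 else σ x (p x) * signFun σ r p d hd (p x)
termination_by d x
decreasing_by exact hd x h

noncomputable def chainFun (r : V) (p : V → V) (d : V → ℕ)
    (hd : ∀ x, x ≠ r → d (p x) < d x) (x : V) : List V :=
  if h : x = r then [r] else x :: chainFun r p d hd (p x)
termination_by d x
decreasing_by exact hd x h

variable (σ : V → V → ℝ) (r : V) (p : V → V) (d : V → ℕ)
    (hd : ∀ x, x ≠ r → d (p x) < d x)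

lemma signFun_root : signFun σ r p d hd r = 1 := by rw [signFun]; simp

lemma signFun_ne (x : V) (hx : x ≠ r) :
    signFun σ r p d hd x = σ x (p x) * signFun σ r p d hd (p x) := by
  rw [signFun]; simp [hx]

lemma signFun_pm (hσp : ∀ x, x ≠ r → σ x (p x) = 1 ∨ σ x (p x) = -1) (x : V) :
    signFun σ r p d hd x = 1 ∨ signFun σ r p d hd x = -1 := by
  refine descent_ind r p d hd (fun y => signFun σ r p d hd y = 1 ∨ signFun σ r p d hd y = -1) ?_ ?_ x
  · show _ ∨ _; rw [signFun_root]; left; rfl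
  · intro x hx ih
    show _ ∨ _
    rw [signFun_ne σ r p d hd x hx]
    rcases hσp x hx with h | h <;> rcases ih with h' | h' <;> rw [h, h'] <;> norm_num

lemma chainFun_root : chainFun r p d hd r = [r] := by rw [chainFun]; simp

lemma chainFun_ne (x : V) (hx : x ≠ r) :
    chainFun r p d hd x = x :: chainFun r p d hd (p x) := by
  rw [chainFun]; simp [hx]

lemma chainFun_ne_nil (x : V) : chainFun r p d hd x ≠ [] := by
  by_cases hx : x = r
  · rw [hx, chainFun_root]; simp
  · rw [chainFun_ne r p d hd x hx]; simp

lemma chainFun_head (x : V) : (chainFun r p d hd x).head? = some x := by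
  by_cases hx : x = r
  · rw [hx, chainFun_root]; rfl
  · rw [chainFun_ne r p d hd x hx]; rfl

lemma chainFun_getLast (x : V) : (chainFun r p d hd x).getLast? = some r := by
  refine descent_ind r p d hd (fun y => (chainFun r p d hd y).getLast? = some r) ?_ ?_ x
  · show (chainFun r p d hd r).getLast? = some r; rw [chainFun_root]; rfl
  · intro x hx ih
    show (chainFun r p d hd x).getLast? = some r
    rw [chainFun_ne r p d hd x hx, List.getLast?_cons, ih]
    simp [chainFun_ne_nil]

lemma chainFun_chain' (step : V → V → Prop) (hstep : ∀ x, x ≠ r → step x (p x)) (x : V) :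
    (chainFun r p d hd x).Chain' step := by
  refine descent_ind r p d hd (fun y => (chainFun r p d hd y).Chain' step) ?_ ?_ x
  · show (chainFun r p d hd r).Chain' step; rw [chainFun_root]; exact List.isChain_singleton _
  · intro x hx ih
    show (chainFun r p d hd x).Chain' step
    rw [chainFun_ne r p d hd x hx]
    show List.IsChain _ _
    rw [List.isChain_cons]
    refine ⟨?_, ih⟩
    intro y hy
    rw [chainFun_head r p d hd (p x)] at hy
    cases hy
    exact hstep x hx

end MyAux

section MyAux2
variable {V : Type*} {G : SimpleGraph V} {σ : V → V → ℝ} {f : V → ℝ}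

lemma swalkstep_symm (hσ : ∀ a b, σ a b = σ b a) {x y : V}
    (h : SWalkStep G σ f x y) : SWalkStep G σ f y x := by
  obtain ⟨h1, h2⟩ := h
  refine ⟨h1.symm, ?_⟩
  rw [hσ y x]
  nlinarith

lemma sconn_symm (hσ : ∀ a b, σ a b = σ b a) {x y : V}
    (h : SConn G σ f x y) : SConn G σ f y x := by
  obtain ⟨l, hl2, hch, hh, hlast⟩ := h
  refine ⟨l.reverse, by simpa using hl2, ?_, by simpa using hlast, by simpa using hh⟩
  show List.IsChain _ _
  rw [List.isChain_reverse]
  exact List.IsChain.imp (fun a b hab => swalkstep_symm hσ hab) hch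

lemma sconn_trans {x y z : V} (h1 : SConn G σ f x y) (h2 : SConn G σ f y z) :
    SConn G σ f x z := by
  obtain ⟨l1, hl1, hc1, hh1, he1⟩ := h1
  obtain ⟨l2, hl2, hc2, hh2, he2⟩ := h2
  cases l2 with
  | nil => simp at hh2
  | cons b t =>
    cases hh2
    refine ⟨l1 ++ t, by simp; omega, ?_, ?_, ?_⟩
    · show List.IsChain _ _
      rw [List.isChain_append]
      refine ⟨hc1, List.IsChain.tail hc2, ?_⟩
      intro a ha c hc
      rw [he1] at ha
      cases ha
      cases t with
      | nil => simp at hc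
      | cons c' t' =>
        cases hc
        exact (List.isChain_cons_cons.mp hc2).1
    · rw [List.head?_append_of_ne_nil]
      · exact hh1
      · intro h; subst h; simp at hl1
    · cases t with
      | nil =>
        simp at he2
        subst he2
        simpa using he1
      | cons c' t' =>
        rw [List.getLast?_append_of_ne_nil _ (by simp)]
        simpa using he2
end MyAux2

section MyAux3
open Finset
variable {V : Type*} [Fintype V] [DecidableEq V]

lemma quad_id (a : V → V → ℝ) (s g : V → ℝ)
    (hsym : ∀ x y, a x y = a y x)
    (hs : ∀ x, s x = 1 ∨ s x = -1) :
    g ⬝ᵥ ((Matrix.of fun x y => (if x = y then (∑ z, a x z * (s x * s z)) else 0) - a x y) *ᵥ g)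
      = (1/2) * ∑ x, ∑ y, a x y * (s x * s y) * (g x * s x - g y * s y)^2 := by
  have key : ∀ x y : V, a x y * (s x * s y) * (g x * s x - g y * s y)^2
      = a x y * (s x * s y) * (g x)^2 + a x y * (s x * s y) * (g y)^2
        - 2 * (a x y * (g x * g y)) := by
    intro x y
    rcases hs x with h | h <;> rcases hs y with h' | h' <;> rw [h, h'] <;> ring
  have lhs_eq : g ⬝ᵥ ((Matrix.of fun x y =>
        (if x = y then (∑ z, a x z * (s x * s z)) else 0) - a x y) *ᵥ g)
      = (∑ x, ∑ y, a x y * (s x * s y) * (g x)^2) - ∑ x, ∑ y, a x y * (g x * g y) := by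
    simp only [dotProduct, Matrix.mulVec, Matrix.of_apply, dotProduct]
    rw [← Finset.sum_sub_distrib]
    refine Finset.sum_congr rfl fun x _ => ?_
    have h1 : ∑ y, ((if x = y then (∑ z, a x z * (s x * s z)) else 0) - a x y) * g y
        = (∑ z, a x z * (s x * s z)) * g x - ∑ y, a x y * g y := by
      simp only [sub_mul]
      rw [Finset.sum_sub_distrib]
      congr 1
      simp only [ite_mul, zero_mul]
      rw [Finset.sum_ite_eq Finset.univ x (fun y => (∑ z, a x z * (s x * s z)) * g y)]
      simp
    rw [h1, mul_sub]
    congr 1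
    · rw [Finset.sum_mul, Finset.mul_sum]
      refine Finset.sum_congr rfl fun z _ => ?_
      ring
    · rw [Finset.mul_sum]
      refine Finset.sum_congr rfl fun y _ => ?_
      ring
  have hswap : ∑ x, ∑ y, a x y * (s x * s y) * (g y)^2
      = ∑ x, ∑ y, a x y * (s x * s y) * (g x)^2 := by
    rw [Finset.sum_comm]
    refine Finset.sum_congr rfl fun x _ => Finset.sum_congr rfl fun y _ => ?_
    rw [hsym y x]; ring
  have rhs_eq : ∑ x, ∑ y, a x y * (s x * s y) * (g x * s x - g y * s y)^2
      = (∑ x, ∑ y, a x y * (s x * s y) * (g x)^2) + (∑ x, ∑ y, a x y * (s x * s y) * (g y)^2)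
        - 2 * ∑ x, ∑ y, a x y * (g x * g y) := by
    rw [show (2 : ℝ) * ∑ x, ∑ y, a x y * (g x * g y)
        = ∑ x, ∑ y, 2 * (a x y * (g x * g y)) by
      rw [Finset.mul_sum]; exact Finset.sum_congr rfl fun x _ => by rw [Finset.mul_sum]]
    rw [← Finset.sum_add_distrib, ← Finset.sum_sub_distrib]
    refine Finset.sum_congr rfl fun x _ => ?_
    rw [← Finset.sum_add_distrib, ← Finset.sum_sub_distrib]
    exact Finset.sum_congr rfl fun y _ => key x y
  rw [lhs_eq, rhs_eq, hswap]
  ring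
end MyAux3

set_option maxHeartbeats 1000000 in
/-- every connected signed graph has a compatible symmetric matrix whose
smallest eigenvalue is simple with a nowhere-vanishing eigenvector, so 𝔖(f₁) = 1. -/
theorem stmt_8 {V : Type*} [Fintype V] [DecidableEq V] (G : SimpleGraph V)
    (σ : V → V → ℝ) (hσ : IsSignature G σ) (hconn : G.Connected) :
    ∃ M : Matrix V V ℝ, M.IsSymm ∧ Compatible M G σ ∧
      ∃ (μ : ℝ) (f : V → ℝ), f ≠ 0 ∧ M.mulVec f = μ • f ∧
        (∀ (μ' : ℝ) (g : V → ℝ), g ≠ 0 → M.mulVec g = μ' • g → μ ≤ μ') ∧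
        (∀ g : V → ℝ, M.mulVec g = μ • g → ∃ c : ℝ, g = c • f) ∧
        (∀ x, f x ≠ 0) ∧ numStrong G σ f = 1 := by
  classical
  obtain ⟨r⟩ := hconn.nonempty
  set d : V → ℕ := fun x => G.dist r x with hd_def
  have hpar : ∀ x : V, x ≠ r → ∃ y, G.Adj x y ∧ d y < d x := by
    intro x hx
    have hd0 : G.dist x r ≠ 0 := by
      rw [SimpleGraph.dist_ne_zero_iff_ne_and_reachable]
      exact ⟨hx, hconn.preconnected x r⟩
    obtain ⟨w, hw⟩ := SimpleGraph.exists_walk_of_dist_ne_zero hd0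
    cases w with
    | nil => exact absurd rfl hx
    | @cons _ y _ hadj w' =>
      refine ⟨y, hadj, ?_⟩
      have h1 : G.dist r y ≤ w'.length := by
        rw [SimpleGraph.dist_comm]; exact SimpleGraph.dist_le w'
      have h2 : G.dist r x = w'.length + 1 := by
        rw [SimpleGraph.dist_comm, ← hw, SimpleGraph.Walk.length_cons]
      simp only [hd_def]
      omega
  clear_value d
  clear hd_def
  set p : V → V := fun x => if h : x = r then r else (hpar x h).choose with hp_def
  have hpr : p r = r := by simp [hp_def]
  have hadjp : ∀ x, x ≠ r → G.Adj x (p x) := by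
    intro x hx
    simp only [hp_def, dif_neg hx]
    exact (hpar x hx).choose_spec.1
  have hd : ∀ x, x ≠ r → d (p x) < d x := by
    intro x hx
    simp only [hp_def, dif_neg hx]
    exact (hpar x hx).choose_spec.2
  clear_value p
  clear hp_def hpar
  set s : V → ℝ := signFun σ r p d hd with hs_def
  have hsr : s r = 1 := signFun_root σ r p d hd
  have hsrec : ∀ x, x ≠ r → s x = σ x (p x) * s (p x) := fun x hx =>
    signFun_ne σ r p d hd x hx
  have hs : ∀ x, s x = 1 ∨ s x = -1 :=
    signFun_pm σ r p d hd (fun x hx => hσ.2 x (p x) (hadjp x hx))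
  clear_value s
  clear hs_def
  have hs2 : ∀ x, s x * s x = 1 := by
    intro x; rcases hs x with h | h <;> rw [h] <;> norm_num
  have hs0 : ∀ x, s x ≠ 0 := by
    intro x; rcases hs x with h | h <;> rw [h] <;> norm_num
  have htau : ∀ x y, G.Adj x y → (y = p x ∨ x = p y) → σ x y * (s x * s y) = 1 := by
    intro x y hxy hP
    rcases hP with h | h
    · have hxr : x ≠ r := by
        rintro rfl; rw [hpr] at h; subst h; exact G.loopless.irrefl _ hxy
      have hrec : s x = σ x (p x) * s (p x) := hsrec x hxr
      subst h
      rcases hσ.2 x (p x) hxy with h1 | h1 <;> rcases hs (p x) with h2 | h2 <;>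
        rw [hrec, h1, h2] <;> norm_num
    · have hyr : y ≠ r := by
        rintro rfl; rw [hpr] at h; subst h; exact G.loopless.irrefl _ hxy
      have hrec : s y = σ y x * s x := by rw [hsrec y hyr, ← h]
      rw [hσ.1 x y]
      rcases hσ.2 y x hxy.symm with h1 | h1 <;> rcases hs x with h2 | h2 <;>
        rw [hrec, h1, h2] <;> norm_num
  -- constants
  set KK : ℝ := ∑ x : V, (3:ℝ) ^ (d x + 1) with hKK_def
  have hKKt : ∀ x : V, (3:ℝ) ^ (d x + 1) ≤ KK := by
    intro x
    rw [hKK_def]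
    have : ∀ y ∈ Finset.univ, (0:ℝ) ≤ (3:ℝ) ^ (d y + 1) := fun y _ => by positivity
    exact Finset.single_le_sum this (Finset.mem_univ x)
  have hKK0 : 0 ≤ KK := le_trans (by positivity) (hKKt r)
  clear_value KK
  clear hKK_def
  set n : ℕ := Fintype.card V with hn_def
  set c : ℝ := 4 * (n:ℝ)^2 * KK + 1 with hc_def
  have hc : 0 < c := by rw [hc_def]; positivity
  set ε : ℝ := 1 / c with hε_def
  have hε : 0 < ε := by rw [hε_def]; positivity
  set a : V → V → ℝ := fun x y =>
    if G.Adj x y then (if (y = p x ∨ x = p y) then 1 else ε) * σ x y else 0 with ha_def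
  have hasym : ∀ x y, a x y = a y x := by
    intro x y
    simp only [ha_def]
    by_cases h : G.Adj x y
    · rw [if_pos h, if_pos h.symm, hσ.1 x y]
      by_cases hP : (y = p x ∨ x = p y)
      · rw [if_pos hP, if_pos hP.symm]
      · rw [if_neg hP, if_neg (fun h' => hP h'.symm)]
    · rw [if_neg h, if_neg (fun h' => h h'.symm)]
  have haxx : ∀ x, a x x = 0 := by intro x; simp [ha_def]
  have haP : ∀ x y, G.Adj x y → (y = p x ∨ x = p y) → a x y = σ x y := by
    intro x y h hP; simp only [ha_def]; rw [if_pos h, if_pos hP, one_mul]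
  have haNP : ∀ x y, G.Adj x y → ¬(y = p x ∨ x = p y) → a x y = ε * σ x y := by
    intro x y h hP; simp only [ha_def]; rw [if_pos h, if_neg hP]
  have haN : ∀ x y, ¬ G.Adj x y → a x y = 0 := by
    intro x y h; simp only [ha_def]; rw [if_neg h]
  clear_value a
  clear ha_def
  set M : Matrix V V ℝ :=
    Matrix.of (fun x y => (if x = y then (∑ z, a x z * (s x * s z)) else 0) - a x y)
    with hM_def
  have hMapp : ∀ x y, M x y = (if x = y then (∑ z, a x z * (s x * s z)) else 0) - a x y := by
    intro x y; rw [hM_def]; rfl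
  have hquad : ∀ g : V → ℝ, g ⬝ᵥ (M *ᵥ g)
      = (1/2) * ∑ x, ∑ y, a x y * (s x * s y) * (g x * s x - g y * s y)^2 := by
    intro g; rw [hM_def]; exact quad_id a s g hasym hs
  clear_value M
  clear hM_def
  have hMsymm : M.IsSymm := by
    rw [Matrix.IsSymm]
    ext x y
    rw [Matrix.transpose_apply, hMapp, hMapp, hasym y x]
    by_cases h : x = y
    · subst h; rfl
    · rw [if_neg h, if_neg (fun h' => h h'.symm)]
  have hane : ∀ x y, G.Adj x y → a x y ≠ 0 := by
    intro x y hxy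
    by_cases hP : (y = p x ∨ x = p y)
    · rw [haP x y hxy hP]
      rcases hσ.2 x y hxy with h1 | h1 <;> rw [h1] <;> norm_num
    · rw [haNP x y hxy hP]
      rcases hσ.2 x y hxy with h1 | h1 <;> rw [h1] <;> simp [hε.ne']
  have hcompat : Compatible M G σ := by
    constructor
    · intro x y
      constructor
      · intro hxy
        refine ⟨hxy.ne, ?_⟩
        rw [hMapp, if_neg hxy.ne, zero_sub]
        simpa using hane x y hxy
      · rintro ⟨hne, hM0⟩
        by_contra hadj
        rw [hMapp, if_neg hne, haN x y hadj] at hM0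
        simp at hM0
    · intro x y hxy
      rw [hMapp, if_neg hxy.ne, zero_sub]
      have hw0 : (0:ℝ) < if (y = p x ∨ x = p y) then 1 else ε := by
        split
        · norm_num
        · exact hε
      set w : ℝ := if (y = p x ∨ x = p y) then 1 else ε with hw_def
      have haw : a x y = w * σ x y := by
        by_cases hP : (y = p x ∨ x = p y)
        · rw [haP x y hxy hP, hw_def, if_pos hP, one_mul]
        · rw [haNP x y hxy hP, hw_def, if_neg hP]
      rw [haw]
      rcases hσ.2 x y hxy with h1 | h1 <;> rw [h1]
      · rw [mul_one, abs_neg, abs_of_pos hw0, neg_div, neg_neg, div_self hw0.ne']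
      · rw [mul_neg_one, neg_neg, abs_of_pos hw0, div_self hw0.ne']
  have heig : M *ᵥ s = (0:ℝ) • s := by
    funext x
    simp only [Matrix.mulVec, dotProduct, Pi.smul_apply, smul_eq_mul, zero_mul]
    have h1 : ∀ y : V, M x y * s y
        = (if x = y then (∑ z, a x z * (s x * s z)) else 0) * s y - a x y * s y := by
      intro y; rw [hMapp, sub_mul]
    rw [Finset.sum_congr rfl (fun y _ => h1 y), Finset.sum_sub_distrib]
    simp only [ite_mul, zero_mul]
    rw [Finset.sum_ite_eq Finset.univ x (fun y => (∑ z, a x z * (s x * s z)) * s y)]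
    rw [if_pos (Finset.mem_univ x), Finset.sum_mul]
    rw [sub_eq_zero]
    refine Finset.sum_congr rfl fun z _ => ?_
    rcases hs x with h | h <;> rw [h] <;> ring
    -- the Dirichlet-energy lower bound
  set S : (V → ℝ) → ℝ :=
    fun g => ∑ x, if x = r then 0 else (g x * s x - g (p x) * s (p x))^2 with hS_def
  have hSnn : ∀ g, 0 ≤ S g := by
    intro g; rw [hS_def]
    refine Finset.sum_nonneg fun x _ => ?_
    split <;> positivity
  have hSterm : ∀ (g : V → ℝ) x, x ≠ r → (g x * s x - g (p x) * s (p x))^2 ≤ S g := by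
    intro g x hx
    rw [hS_def]
    have h0 : ∀ y ∈ Finset.univ,
        (0:ℝ) ≤ if y = r then 0 else (g y * s y - g (p y) * s (p y))^2 :=
      fun y _ => by split <;> positivity
    calc (g x * s x - g (p x) * s (p x))^2
        = if x = r then 0 else (g x * s x - g (p x) * s (p x))^2 := by rw [if_neg hx]
      _ ≤ _ := Finset.single_le_sum h0 (Finset.mem_univ x)
  have hroot : ∀ (g : V → ℝ) x, (g x * s x - g r * s r)^2 ≤ (3:ℝ)^(d x + 1) * S g := by
    intro g x
    refine descent_ind r p d hd
      (fun y => (g y * s y - g r * s r)^2 ≤ (3:ℝ)^(d y + 1) * S g) ?_ ?_ x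
    · show (g r * s r - g r * s r)^2 ≤ (3:ℝ)^(d r + 1) * S g
      have h := hSnn g
      have h' : (0:ℝ) ≤ (3:ℝ) ^ (d r + 1) * S g := by positivity
      simpa using h'
    · intro x hx ih
      show (g x * s x - g r * s r)^2 ≤ (3:ℝ)^(d x + 1) * S g
      have h1 : (g x * s x - g (p x) * s (p x))^2 ≤ S g := hSterm g x hx
      have h2 : (3:ℝ)^(d (p x) + 1 + 1) ≤ (3:ℝ)^(d x + 1) := by
        apply pow_le_pow_right₀ (by norm_num)
        have := hd x hx; omega
      have h3 : (3:ℝ) ≤ (3:ℝ)^(d (p x) + 1) := by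
        calc (3:ℝ) = 3^1 := (pow_one 3).symm
        _ ≤ _ := pow_le_pow_right₀ (by norm_num) (by omega)
      have hq1 : 0 ≤ ((3:ℝ)^(d (p x) + 1) - 3) * S g :=
        mul_nonneg (by linarith) (hSnn g)
      have hq2 : 0 ≤ ((3:ℝ)^(d x + 1) - (3:ℝ)^(d (p x) + 1 + 1)) * S g :=
        mul_nonneg (by linarith) (hSnn g)
      have hps : (3:ℝ)^(d (p x) + 1 + 1) = 3^(d (p x) + 1) * 3 := pow_succ 3 _
      nlinarith [h1, ih, hq1, hq2, hps, hSnn g,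
        sq_nonneg ((g x * s x - g (p x) * s (p x)) - (g (p x) * s (p x) - g r * s r))]
  have hroot2 : ∀ (g : V → ℝ) x, (g x * s x - g r * s r)^2 ≤ KK * S g := by
    intro g x
    calc (g x * s x - g r * s r)^2 ≤ (3:ℝ)^(d x + 1) * S g := hroot g x
    _ ≤ KK * S g := mul_le_mul_of_nonneg_right (hKKt x) (hSnn g)
  have hpairb : ∀ (g : V → ℝ) x y, (g x * s x - g y * s y)^2 ≤ 4 * KK * S g := by
    intro g x y
    nlinarith [hroot2 g x, hroot2 g y,
      sq_nonneg ((g x * s x - g r * s r) + (g y * s y - g r * s r))]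
  have hQbound : ∀ g : V → ℝ, S g ≤ 2 * c * (g ⬝ᵥ M *ᵥ g) := by
    intro g
    have hterm : ∀ x y : V,
        (if G.Adj x y ∧ (y = p x ∨ x = p y) then (g x * s x - g y * s y)^2 else 0)
          - ε * (g x * s x - g y * s y)^2
        ≤ a x y * (s x * s y) * (g x * s x - g y * s y)^2 := by
      intro x y
      by_cases hxy : G.Adj x y
      · by_cases hP : (y = p x ∨ x = p y)
        · rw [if_pos ⟨hxy, hP⟩, haP x y hxy hP]
          have ht := htau x y hxy hP
          nlinarith [sq_nonneg (g x * s x - g y * s y), hε]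
        · rw [if_neg (fun h => hP h.2), haNP x y hxy hP]
          have hτ : σ x y * (s x * s y) = 1 ∨ σ x y * (s x * s y) = -1 := by
            rcases hσ.2 x y hxy with h1 | h1 <;> rcases hs x with h2 | h2 <;>
              rcases hs y with h3 | h3 <;> rw [h1, h2, h3] <;> norm_num
          have heq : ε * σ x y * (s x * s y) * (g x * s x - g y * s y)^2
              = ε * (σ x y * (s x * s y)) * (g x * s x - g y * s y)^2 := by ring
          rw [heq]
          rcases hτ with h | h <;> rw [h] <;>
            nlinarith [sq_nonneg (g x * s x - g y * s y), hε]
      · rw [if_neg (fun h => hxy h.1), haN x y hxy]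
        nlinarith [sq_nonneg (g x * s x - g y * s y), hε]
    have hsum0 : (∑ x, ∑ y, ((if G.Adj x y ∧ (y = p x ∨ x = p y)
            then (g x * s x - g y * s y)^2 else 0)
          - ε * (g x * s x - g y * s y)^2))
        ≤ ∑ x, ∑ y, a x y * (s x * s y) * (g x * s x - g y * s y)^2 :=
      Finset.sum_le_sum fun x _ => Finset.sum_le_sum fun y _ => hterm x y
    simp only [Finset.sum_sub_distrib] at hsum0
    have hT1 : S g ≤ ∑ x, ∑ y, (if G.Adj x y ∧ (y = p x ∨ x = p y)
        then (g x * s x - g y * s y)^2 else 0) := by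
      rw [hS_def]
      refine Finset.sum_le_sum fun x _ => ?_
      have h0 : ∀ y ∈ Finset.univ, (0:ℝ) ≤ (if G.Adj x y ∧ (y = p x ∨ x = p y)
          then (g x * s x - g y * s y)^2 else 0) := fun y _ => by split <;> positivity
      by_cases hx : x = r
      · rw [if_pos hx]
        exact Finset.sum_nonneg h0
      · rw [if_neg hx]
        calc (g x * s x - g (p x) * s (p x))^2
            = (if G.Adj x (p x) ∧ (p x = p x ∨ x = p (p x))
                then (g x * s x - g (p x) * s (p x))^2 else 0) := by
              rw [if_pos ⟨hadjp x hx, Or.inl rfl⟩]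
          _ ≤ _ := Finset.single_le_sum h0 (Finset.mem_univ (p x))
    have hT2 : ∑ x, ∑ y, ε * (g x * s x - g y * s y)^2
        ≤ ε * ((n:ℝ) * ((n:ℝ) * (4 * KK * S g))) := by
      calc ∑ x, ∑ y, ε * (g x * s x - g y * s y)^2
          ≤ ∑ _x : V, ∑ _y : V, ε * (4 * KK * S g) :=
            Finset.sum_le_sum fun x _ => Finset.sum_le_sum fun y _ =>
              mul_le_mul_of_nonneg_left (hpairb g x y) hε.le
        _ = (n:ℝ) * ((n:ℝ) * (ε * (4 * KK * S g))) := by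
            rw [Finset.sum_const, Finset.sum_const, Finset.card_univ, ← hn_def,
              nsmul_eq_mul, nsmul_eq_mul]
            try ring
        _ = ε * ((n:ℝ) * ((n:ℝ) * (4 * KK * S g))) := by ring
    have h2Q : ∑ x, ∑ y, a x y * (s x * s y) * (g x * s x - g y * s y)^2
        = 2 * (g ⬝ᵥ M *ᵥ g) := by
      rw [hquad g]; ring
    have hkey : S g - ε * ((n:ℝ) * ((n:ℝ) * (4 * KK * S g)))
        ≤ 2 * (g ⬝ᵥ M *ᵥ g) := by
      rw [← h2Q]; linarith [hsum0, hT1, hT2]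
    have hεc : ε * c = 1 := by rw [hε_def]; field_simp
    have h5 := mul_le_mul_of_nonneg_left hkey hc.le
    have h6 : c * (S g - ε * ((n:ℝ) * ((n:ℝ) * (4 * KK * S g))))
        = c * S g - (ε * c) * ((n:ℝ) * ((n:ℝ) * (4 * KK * S g))) := by ring
    rw [h6, hεc, one_mul] at h5
    have h7 : c * S g - (n:ℝ) * ((n:ℝ) * (4 * KK * S g)) = S g := by
      rw [hc_def]; ring
    rw [h7] at h5
    linarith [h5]
  have hQnn : ∀ g : V → ℝ, 0 ≤ g ⬝ᵥ M *ᵥ g := by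
    intro g
    nlinarith [hQbound g, hSnn g, hc]
  have hfne : s ≠ (0 : V → ℝ) := by
    intro h
    have h1 : s r = 0 := by rw [h]; rfl
    rw [hsr] at h1
    exact one_ne_zero h1
  have hmin : ∀ (μ' : ℝ) (g : V → ℝ), g ≠ 0 → M *ᵥ g = μ' • g → (0:ℝ) ≤ μ' := by
    intro μ' g hg heq'
    have hq : g ⬝ᵥ M *ᵥ g = μ' * (g ⬝ᵥ g) := by
      rw [heq', dotProduct_smul, smul_eq_mul]
    have hgg : 0 < g ⬝ᵥ g := by
      have hnn : ∀ x ∈ Finset.univ, (0:ℝ) ≤ g x * g x := fun x _ => mul_self_nonneg _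
      obtain ⟨x, hx⟩ := Function.ne_iff.mp hg
      have hpos : 0 < g x * g x := mul_self_pos.mpr hx
      exact Finset.sum_pos' hnn ⟨x, Finset.mem_univ x, hpos⟩
    nlinarith [hQnn g, hq, hgg]
  have hspace : ∀ g : V → ℝ, M *ᵥ g = (0:ℝ) • g → ∃ cc : ℝ, g = cc • s := by
    intro g heq'
    have h0 : M *ᵥ g = 0 := by rw [heq', zero_smul]
    have hQ0 : g ⬝ᵥ M *ᵥ g = 0 := by rw [h0, dotProduct_zero]
    have hS0 : S g = 0 := by
      have := hQbound g
      rw [hQ0] at this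
      have h' := hSnn g
      linarith
    have hall : ∀ x, x ≠ r → g x * s x = g (p x) * s (p x) := by
      intro x hx
      have h1 : (g x * s x - g (p x) * s (p x))^2 ≤ 0 := by
        have := hSterm g x hx
        rw [hS0] at this
        exact this
      nlinarith [sq_nonneg (g x * s x - g (p x) * s (p x))]
    have hconst : ∀ x, g x * s x = g r * s r := by
      intro x
      refine descent_ind r p d hd (fun y => g y * s y = g r * s r) rfl ?_ x
      intro x hx ih
      show g x * s x = g r * s r
      rw [hall x hx]
      exact ih
    refine ⟨g r * s r, ?_⟩
    funext x
    show g x = (g r * s r) * s x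
    calc g x = g x * (s x * s x) := by rw [hs2 x, mul_one]
      _ = (g x * s x) * s x := by ring
      _ = (g r * s r) * s x := by rw [hconst x]
  have hstep : ∀ x, x ≠ r → SWalkStep G σ s x (p x) := by
    intro x hx
    refine ⟨hadjp x hx, ?_⟩
    nlinarith [htau x (p x) (hadjp x hx) (Or.inl rfl)]
  have htoroot : ∀ x, x ≠ r → SConn G σ s x r := by
    intro x hx
    refine ⟨chainFun r p d hd x, ?_, chainFun_chain' r p d hd _ hstep x,
      chainFun_head r p d hd x, chainFun_getLast r p d hd x⟩
    rw [chainFun_ne r p d hd x hx]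
    have := List.length_pos_iff.mpr (chainFun_ne_nil r p d hd (p x))
    simp only [List.length_cons]
    omega
  have hsconn : ∀ x w : V, x = w ∨ SConn G σ s x w := by
    intro x w
    by_cases hxw : x = w
    · exact Or.inl hxw
    right
    by_cases hxr : x = r
    · subst hxr
      exact sconn_symm hσ.1 (htoroot w (fun h => hxw h.symm))
    by_cases hwr : w = r
    · subst hwr; exact htoroot x hxr
    · exact sconn_trans (htoroot x hxr) (sconn_symm hσ.1 (htoroot w hwr))
  have hclass : ∀ w, strongClass G σ s w = Set.univ := by
    intro w
    ext x
    simp only [strongClass, Set.mem_setOf_eq, Set.mem_univ, iff_true]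
    exact ⟨hs0 x, hsconn x w⟩
  have hdom : strongDomains G σ s = {Set.univ} := by
    ext D
    simp only [strongDomains, Set.mem_setOf_eq, Set.mem_singleton_iff]
    constructor
    · rintro ⟨w, -, rfl⟩
      exact hclass w
    · rintro rfl
      exact ⟨r, hs0 r, (hclass r).symm⟩
  have hnum : numStrong G σ s = 1 := by
    rw [numStrong, hdom]
    simp
  exact ⟨M, hMsymm, hcompat, 0, s, hfne, heig, hmin, hspace, hs0, hnum⟩
end
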